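/- arXiv:cs/0610145 — 4 statements merged into one kernel-verified Lean document; each statement's English description precedes it below -/
import Mathlib

section
/- For any binary hypothesis testing scheme over a DMC with feedback with stopping time T satisfying E[T] < ∞, the divergence between the output distributions under the two hypotheses satisfies D(P_A || P_N) ≤ C_1 · E[T | A], where C_1 = max_{x,x'} D(p(·|x) || p(·|x')). -/
open MeasureTheory
open scoped BigOperators

/-- The cylinder set of output sequences agreeing with `v` on the first `n` coordinates. -/
def cylinder {Y : Type*} (n : ℕ) (v : ℕ → Y) : Set (ℕ → Y) :=
  {ω | ∀ i < n, ω i = v i}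

/-- The set of output sequences stopped by `S` at the leaf `s` of the observation tree. -/
def stopCell {Y : Type*} (S : (ℕ → Y) → ℕ) (s : Σ n, Fin n → Y) : Set (ℕ → Y) :=
  {ω | S ω = s.1 ∧ ∀ i : Fin s.1, ω i = s.2 i}

namespace Stmt5

variable {X Y : Type*}

noncomputable def ext [Nonempty Y] (n : ℕ) (u : Fin n → Y) : ℕ → Y :=
  fun i => if h : i < n then u ⟨i, h⟩ else Classical.arbitrary Y

theorem ext_lt [Nonempty Y] {n : ℕ} (u : Fin n → Y) {i : ℕ} (h : i < n) :
    ext n u i = u ⟨i, h⟩ := dif_pos h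

theorem ext_coe [Nonempty Y] {n : ℕ} (u : Fin n → Y) (i : Fin n) :
    ext n u i = u i := by rw [ext_lt u i.isLt]

noncomputable def W (p : X → Y → ℝ) (f : Bool → (n : ℕ) → (Fin n → Y) → X) (b : Bool) :
    ℕ → (ℕ → Y) → ℝ
  | 0, _ => 1
  | n+1, v => W p f b n v * p (f b n fun i => v i) (v n)

variable (p : X → Y → ℝ) (f : Bool → (n : ℕ) → (Fin n → Y) → X)

theorem W_congr (b : Bool) : ∀ (n : ℕ) {v v' : ℕ → Y}, (∀ i < n, v i = v' i) →
    W p f b n v = W p f b n v'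
  | 0, _, _, _ => rfl
  | n+1, v, v', h => by
    have h1 : W p f b n v = W p f b n v' := W_congr b n fun i hi => h i (by omega)
    have h2 : (fun i : Fin n => v i) = fun i : Fin n => v' i :=
      funext fun i => h i (by omega)
    show W p f b n v * _ = W p f b n v' * _
    rw [h1, h2, h n (Nat.lt_succ_self n)]

theorem W_pos (hpos : ∀ x y, 0 < p x y) (b : Bool) : ∀ (n : ℕ) (v : ℕ → Y), 0 < W p f b n v
  | 0, _ => one_pos
  | n+1, v => mul_pos (W_pos hpos b n v) (hpos _ _)

theorem p_le_one [Fintype Y] (hpos : ∀ x y, 0 < p x y) (hsum : ∀ x, ∑ y, p x y = 1)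
    (x : X) (y : Y) : p x y ≤ 1 := by
  rw [← hsum x]
  exact Finset.single_le_sum (fun y _ => (hpos x y).le) (Finset.mem_univ y)

theorem W_le_one [Fintype Y] (hpos : ∀ x y, 0 < p x y) (hsum : ∀ x, ∑ y, p x y = 1) (b : Bool) :
    ∀ (n : ℕ) (v : ℕ → Y), W p f b n v ≤ 1
  | 0, _ => le_refl 1
  | n+1, v => by
    have := W_pos p f hpos b n v
    have := hpos (f b n fun i => v i) (v n)
    have h1 := W_le_one hpos hsum b n v
    have h2 := p_le_one p hpos hsum (f b n fun i => v i) (v n)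
    calc W p f b n v * p (f b n fun i => v i) (v n) ≤ 1 * 1 := by
          apply mul_le_mul h1 h2 (by linarith) one_pos.le
      _ = 1 := by ring

theorem cylinder_zero (v : ℕ → Y) : _root_.cylinder 0 v = Set.univ := by
  ext ω; simp [_root_.cylinder]

theorem measurableSet_cylinder [MeasurableSpace Y] [MeasurableSingletonClass Y]
    (n : ℕ) (v : ℕ → Y) : MeasurableSet (_root_.cylinder n v) := by
  have : _root_.cylinder n v = ⋂ i ∈ Set.Iio n, (fun ω : ℕ → Y => ω i) ⁻¹' {v i} := by
    ext ω; simp [_root_.cylinder]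
  rw [this]
  exact MeasurableSet.biInter (Set.to_countable _) fun i _ =>
    (measurable_pi_apply i) (measurableSet_singleton _)

theorem meas_cylinder [MeasurableSpace Y] (hpos : ∀ x y, 0 < p x y) (b : Bool)
    (μ : Measure (ℕ → Y)) [IsProbabilityMeasure μ]
    (hrec : ∀ (n : ℕ) (v : ℕ → Y), μ (_root_.cylinder (n + 1) v) =
      μ (_root_.cylinder n v) * ENNReal.ofReal (p (f b n fun i => v i) (v n))) :
    ∀ (n : ℕ) (v : ℕ → Y), μ (_root_.cylinder n v) = ENNReal.ofReal (W p f b n v)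
  | 0, v => by
    rw [cylinder_zero]
    show μ Set.univ = ENNReal.ofReal 1
    simp
  | n+1, v => by
    rw [hrec n v, meas_cylinder hpos b μ hrec n v,
      ← ENNReal.ofReal_mul (W_pos p f hpos b n v).le]
    rfl

theorem partition [Nonempty Y] [Fintype Y] (n : ℕ) (Q : (ℕ → Y) → Prop)
    [DecidablePred fun u : Fin n → Y => Q (ext n u)]
    (hQ : ∀ ω ω' : ℕ → Y, (∀ i < n, ω i = ω' i) → (Q ω ↔ Q ω')) :
    {ω : ℕ → Y | Q ω} =
      ⋃ u ∈ Finset.univ.filter (fun u : Fin n → Y => Q (ext n u)), _root_.cylinder n (ext n u) := by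
  ext ω
  simp only [Set.mem_setOf_eq, Set.mem_iUnion, Finset.mem_filter, Finset.mem_univ, true_and,
    exists_prop]
  constructor
  · intro hω
    refine ⟨fun i : Fin n => ω i, ?_, ?_⟩
    · exact (hQ ω (ext n (fun i : Fin n => ω i))
        (fun i hi => by rw [ext_lt _ hi])).mp hω
    · intro i hi
      rw [ext_lt _ hi]
  · rintro ⟨u, hu, hcyl⟩
    exact (hQ ω (ext n u) (fun i hi => hcyl i hi)).mpr hu

theorem meas_partition [Nonempty Y] [Fintype Y] [MeasurableSpace Y] [MeasurableSingletonClass Y]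
    (μ : Measure (ℕ → Y)) (n : ℕ) (Q : (ℕ → Y) → Prop)
    [DecidablePred fun u : Fin n → Y => Q (ext n u)]
    (hQ : ∀ ω ω' : ℕ → Y, (∀ i < n, ω i = ω' i) → (Q ω ↔ Q ω')) :
    μ {ω : ℕ → Y | Q ω} =
      ∑ u ∈ Finset.univ.filter (fun u : Fin n → Y => Q (ext n u)), μ (_root_.cylinder n (ext n u)) := by
  rw [partition n Q hQ]
  refine measure_biUnion_finset ?_ fun u _ => measurableSet_cylinder n _
  intro u _ u' _ hne
  refine Set.disjoint_left.mpr fun ω h1 h2 => hne ?_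
  funext i
  have e1 : ω i = ext n u i := h1 i i.isLt
  have e2 : ω i = ext n u' i := h2 i i.isLt
  rw [ext_coe] at e1 e2
  rw [← e1, ← e2]


theorem T_congr_ge (T : (ℕ → Y) → ℕ)
    (hstop : ∀ (n : ℕ) (ω ω' : ℕ → Y), (∀ i < n, ω i = ω' i) → (T ω = n ↔ T ω' = n))
    (n : ℕ) (ω ω' : ℕ → Y) (h : ∀ i < n, ω i = ω' i) : n ≤ T ω ↔ n ≤ T ω' := by
  constructor
  · intro h1
    by_contra h2
    push_neg at h2
    have := (hstop (T ω') ω' ω (fun i hi => (h i (by omega)).symm)).mp rfl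
    omega
  · intro h1
    by_contra h2
    push_neg at h2
    have := (hstop (T ω) ω ω' (fun i hi => h i (by omega))).mp rfl
    omega

theorem stopCell_eq [Nonempty Y] (T : (ℕ → Y) → ℕ)
    (hstop : ∀ (n : ℕ) (ω ω' : ℕ → Y), (∀ i < n, ω i = ω' i) → (T ω = n ↔ T ω' = n))
    (n : ℕ) (u : Fin n → Y) :
    stopCell T ⟨n, u⟩ =
      if T (ext n u) = n then _root_.cylinder n (ext n u) else ∅ := by
  have hiff : ∀ ω : ℕ → Y, (∀ i : Fin n, ω i = u i) ↔ (∀ i < n, ω i = ext n u i) := by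
    intro ω
    constructor
    · intro hω i hi; rw [ext_lt u hi]; exact hω ⟨i, hi⟩
    · intro hω i; rw [← ext_coe u i]; exact hω i i.isLt
  ext ω
  by_cases h : T (ext n u) = n
  · simp only [stopCell, Set.mem_setOf_eq, if_pos h, _root_.cylinder]
    constructor
    · rintro ⟨h1, h2⟩; exact (hiff ω).mp h2
    · intro h1
      exact ⟨(hstop n ω (ext n u) h1).mpr h, (hiff ω).mpr h1⟩
  · simp only [stopCell, Set.mem_setOf_eq, if_neg h, Set.mem_empty_iff_false, iff_false]
    rintro ⟨h1, h2⟩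
    exact h ((hstop n (ext n u) ω (fun i hi => ((hiff ω).mp h2 i hi).symm)).mpr h1)

theorem logW_succ (hpos : ∀ x y, 0 < p x y) (n : ℕ) (v : ℕ → Y) :
    Real.log (W p f true (n+1) v / W p f false (n+1) v) =
      Real.log (W p f true n v / W p f false n v) +
      Real.log (p (f true n fun i => v i) (v n) / p (f false n fun i => v i) (v n)) := by
  have h1 := W_pos p f hpos true n v
  have h2 := W_pos p f hpos false n v
  have h3 := hpos (f true n fun i => v i) (v n)
  have h4 := hpos (f false n fun i => v i) (v n)
  show Real.log ((W p f true n v * _) / (W p f false n v * _)) = _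
  rw [mul_div_mul_comm, Real.log_mul (by positivity) (by positivity)]

theorem abs_logW [Fintype X] [Fintype Y] (hpos : ∀ x y, 0 < p x y) {M : ℝ}
    (hM : ∀ (x x' : X) (y : Y), |Real.log (p x y / p x' y)| ≤ M) :
    ∀ (n : ℕ) (v : ℕ → Y), |Real.log (W p f true n v / W p f false n v)| ≤ n * M
  | 0, v => by
    show |Real.log ((1:ℝ) / 1)| ≤ _
    simp
  | n+1, v => by
    rw [logW_succ p f hpos n v]
    calc |Real.log (W p f true n v / W p f false n v) +
          Real.log (p (f true n fun i => v i) (v n) / p (f false n fun i => v i) (v n))|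
        ≤ |Real.log (W p f true n v / W p f false n v)| +
          |Real.log (p (f true n fun i => v i) (v n) / p (f false n fun i => v i) (v n))| :=
          abs_add_le _ _
      _ ≤ n * M + M := add_le_add (abs_logW hpos hM n v) (hM _ _ _)
      _ = (n+1 : ℕ) * M := by push_cast; ring

theorem mul_log_div_ge {a b : ℝ} (ha : 0 < a) (hb : 0 < b) : a - b ≤ a * Real.log (a / b) := by
  have h := Real.log_le_sub_one_of_pos (x := b / a) (by positivity)
  have hl : Real.log (a / b) = -Real.log (b / a) := by rw [← Real.log_inv, inv_div]
  rw [hl]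
  have h2 := mul_le_mul_of_nonneg_left h ha.le
  have e : a * (b / a - 1) = b - a := by field_simp
  nlinarith [h2, e]


theorem meas_toReal [Fintype Y] [Nonempty Y] [MeasurableSpace Y] [MeasurableSingletonClass Y]
    (hpos : ∀ x y, 0 < p x y) (b : Bool) (μ : Measure (ℕ → Y)) [IsProbabilityMeasure μ]
    (hrec : ∀ (n : ℕ) (v : ℕ → Y), μ (_root_.cylinder (n + 1) v) =
      μ (_root_.cylinder n v) * ENNReal.ofReal (p (f b n fun i => v i) (v n)))
    (n : ℕ) (Q : (ℕ → Y) → Prop)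
    [DecidablePred fun u : Fin n → Y => Q (ext n u)]
    (hQ : ∀ ω ω' : ℕ → Y, (∀ i < n, ω i = ω' i) → (Q ω ↔ Q ω')) :
    (μ {ω : ℕ → Y | Q ω}).toReal =
      ∑ u ∈ Finset.univ.filter (fun u : Fin n → Y => Q (ext n u)), W p f b n (ext n u) := by
  rw [meas_partition μ n Q hQ,
    Finset.sum_congr rfl (fun u _ => meas_cylinder p f hpos b μ hrec n (ext n u)),
    ← ENNReal.ofReal_sum_of_nonneg (fun u _ => (W_pos p f hpos b n _).le),
    ENNReal.toReal_ofReal (Finset.sum_nonneg fun u _ => (W_pos p f hpos b n _).le)]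

theorem measurableSet_invariant [Fintype Y] [Nonempty Y] [MeasurableSpace Y]
    [MeasurableSingletonClass Y] (n : ℕ) (Q : (ℕ → Y) → Prop)
    [DecidablePred fun u : Fin n → Y => Q (ext n u)]
    (hQ : ∀ ω ω' : ℕ → Y, (∀ i < n, ω i = ω' i) → (Q ω ↔ Q ω')) :
    MeasurableSet {ω : ℕ → Y | Q ω} := by
  classical
  rw [partition n Q hQ]
  exact Finset.measurableSet_biUnion _ fun u _ => measurableSet_cylinder n _

theorem cell_meas [Fintype Y] [Nonempty Y] [MeasurableSpace Y] [MeasurableSingletonClass Y]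
    (hpos : ∀ x y, 0 < p x y) (b : Bool) (μ : Measure (ℕ → Y)) [IsProbabilityMeasure μ]
    (hrec : ∀ (n : ℕ) (v : ℕ → Y), μ (_root_.cylinder (n + 1) v) =
      μ (_root_.cylinder n v) * ENNReal.ofReal (p (f b n fun i => v i) (v n)))
    (T : (ℕ → Y) → ℕ)
    (hstop : ∀ (n : ℕ) (ω ω' : ℕ → Y), (∀ i < n, ω i = ω' i) → (T ω = n ↔ T ω' = n))
    (n : ℕ) (u : Fin n → Y) :
    (μ (stopCell T ⟨n, u⟩)).toReal =
      if T (ext n u) = n then W p f b n (ext n u) else 0 := by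
  rw [stopCell_eq T hstop n u]
  by_cases h : T (ext n u) = n
  · rw [if_pos h, if_pos h, meas_cylinder p f hpos b μ hrec n (ext n u),
      ENNReal.toReal_ofReal (W_pos p f hpos b n _).le]
  · rw [if_neg h, if_neg h, measure_empty, ENNReal.toReal_zero]


noncomputable def FF (n : ℕ) (v : ℕ → Y) : ℝ :=
  W p f true n v * Real.log (W p f true n v / W p f false n v)

noncomputable def dd [Fintype Y] (x x' : X) : ℝ := ∑ y, p x y * Real.log (p x y / p x' y)

noncomputable def AA [Fintype Y] [Nonempty Y] (T : (ℕ → Y) → ℕ) (n : ℕ) : ℝ :=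
  ∑ u ∈ Finset.univ.filter (fun u : Fin n → Y => n ≤ T (ext n u)), FF p f n (ext n u)

noncomputable def GG [Fintype Y] [Nonempty Y] (T : (ℕ → Y) → ℕ) (n : ℕ) : ℝ :=
  ∑ u ∈ Finset.univ.filter (fun u : Fin n → Y => T (ext n u) = n), FF p f n (ext n u)

noncomputable def RR [Fintype X] [Fintype Y] [Nonempty Y] (T : (ℕ → Y) → ℕ) (n : ℕ) : ℝ :=
  ∑ u ∈ Finset.univ.filter (fun u : Fin n → Y => n ≤ T (ext n u) ∧ ¬ T (ext n u) = n),
    W p f true n (ext n u) *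
      dd p (f true n fun i => ext n u i) (f false n fun i => ext n u i)

theorem AA_zero [Fintype Y] [Nonempty Y] (T : (ℕ → Y) → ℕ) : AA p f T 0 = 0 := by
  refine Finset.sum_eq_zero fun u _ => ?_
  show W p f true 0 _ * Real.log (W p f true 0 _ / W p f false 0 _) = 0
  show (1:ℝ) * Real.log ((1:ℝ)/(1:ℝ)) = 0
  simp

theorem step [Fintype X] [Fintype Y] [Nonempty Y]
    (hpos : ∀ x y, 0 < p x y) (hsum : ∀ x, ∑ y, p x y = 1)
    (T : (ℕ → Y) → ℕ)
    (hstop : ∀ (n : ℕ) (ω ω' : ℕ → Y), (∀ i < n, ω i = ω' i) → (T ω = n ↔ T ω' = n))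
    (n : ℕ) :
    AA p f T (n+1) = AA p f T n - GG p f T n + RR p f T n := by
  classical
  -- rewrite AA (n+1) as a sum over all tuples with an if
  have h0 : AA p f T (n+1) = ∑ w : Fin (n+1) → Y,
      (if n+1 ≤ T (ext (n+1) w) then FF p f (n+1) (ext (n+1) w) else 0) := by
    rw [AA, Finset.sum_filter]
  -- reindex by snoc
  have h1 : ∑ w : Fin (n+1) → Y,
      (if n+1 ≤ T (ext (n+1) w) then FF p f (n+1) (ext (n+1) w) else 0)
      = ∑ z : Y × (Fin n → Y),
        (if n+1 ≤ T (ext (n+1) (Fin.snoc z.2 z.1)) then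
          FF p f (n+1) (ext (n+1) (Fin.snoc z.2 z.1)) else 0) := by
    refine (Fintype.sum_equiv (Fin.snocEquiv (fun _ => Y)) _ _ fun z => ?_).symm
    rfl
  have h2 : ∑ z : Y × (Fin n → Y),
      (if n+1 ≤ T (ext (n+1) (Fin.snoc z.2 z.1)) then
          FF p f (n+1) (ext (n+1) (Fin.snoc z.2 z.1)) else 0)
      = ∑ u : Fin n → Y, ∑ y : Y,
        (if n+1 ≤ T (ext (n+1) (Fin.snoc u y)) then
          FF p f (n+1) (ext (n+1) (Fin.snoc u y)) else 0) := by
    rw [Fintype.sum_prod_type]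
    exact Finset.sum_comm
  -- per-u analysis
  have key : ∀ u : Fin n → Y, ∑ y : Y,
      (if n+1 ≤ T (ext (n+1) (Fin.snoc u y)) then
          FF p f (n+1) (ext (n+1) (Fin.snoc u y)) else 0)
      = if n ≤ T (ext n u) ∧ ¬ T (ext n u) = n then
          FF p f n (ext n u) + W p f true n (ext n u) *
            dd p (f true n fun i => ext n u i) (f false n fun i => ext n u i)
        else 0 := by
    intro u
    have hag : ∀ y : Y, ∀ i < n, ext (n+1) (Fin.snoc u y) i = ext n u i := by
      intro y i hi
      rw [ext_lt _ (show i < n + 1 by omega), ext_lt u hi]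
      simp [Fin.snoc, hi]
    have hwn : ∀ y : Y, ext (n+1) (Fin.snoc u y) n = y := by
      intro y
      rw [ext_lt _ (Nat.lt_succ_self n)]
      simp [Fin.snoc]
    have hfun : ∀ y : Y, (fun i : Fin n => ext (n+1) (Fin.snoc u y) i) = fun i : Fin n => (ext n u) i := by
      intro y; funext i; exact hag y i i.isLt
    have halive : ∀ y : Y, (n+1 ≤ T (ext (n+1) (Fin.snoc u y))) ↔ (n ≤ T (ext n u) ∧ ¬ T (ext n u) = n) := by
      intro y
      have e1 : n ≤ T (ext (n+1) (Fin.snoc u y)) ↔ n ≤ T (ext n u) :=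
        T_congr_ge T hstop n _ _ (hag y)
      have e2 : T (ext (n+1) (Fin.snoc u y)) = n ↔ T (ext n u) = n := hstop n _ _ (hag y)
      constructor
      · intro h; exact ⟨e1.mp (by omega), fun hc => by omega⟩
      · intro ⟨ha, hb⟩
        have := e1.mpr ha
        rcases Nat.lt_or_ge n (T (ext (n+1) (Fin.snoc u y))) with h | h
        · omega
        · exact absurd (e2.mp (by omega)) hb
    have hW : ∀ (b : Bool) (y : Y), W p f b (n+1) (ext (n+1) (Fin.snoc u y))
        = W p f b n (ext n u) * p (f b n fun i : Fin n => (ext n u) i) y := by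
      intro b y
      show W p f b n (ext (n+1) (Fin.snoc u y)) *
        p (f b n fun i : Fin n => ext (n+1) (Fin.snoc u y) i) (ext (n+1) (Fin.snoc u y) n) = _
      rw [W_congr p f b n (hag y), hfun y, hwn y]
    by_cases hc : n ≤ T (ext n u) ∧ ¬ T (ext n u) = n
    · rw [if_pos hc]
      have hFF : ∀ y : Y, FF p f (n+1) (ext (n+1) (Fin.snoc u y))
          = FF p f n (ext n u) * p (f true n fun i : Fin n => (ext n u) i) y +
            W p f true n (ext n u) * (p (f true n fun i : Fin n => (ext n u) i) y *
              Real.log (p (f true n fun i : Fin n => (ext n u) i) y / p (f false n fun i : Fin n => (ext n u) i) y)) := by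
        intro y
        have hWt := W_pos p f hpos true n (ext n u)
        have hWf := W_pos p f hpos false n (ext n u)
        have hpt := hpos (f true n fun i : Fin n => (ext n u) i) y
        have hpf := hpos (f false n fun i : Fin n => (ext n u) i) y
        rw [FF, hW true y, hW false y, mul_div_mul_comm,
          Real.log_mul (by positivity) (by positivity)]
        rw [FF]
        ring
      calc ∑ y : Y, (if n+1 ≤ T (ext (n+1) (Fin.snoc u y)) then
            FF p f (n+1) (ext (n+1) (Fin.snoc u y)) else 0)
          = ∑ y : Y, FF p f (n+1) (ext (n+1) (Fin.snoc u y)) :=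
            Finset.sum_congr rfl fun y _ => if_pos ((halive y).mpr hc)
        _ = ∑ y : Y, (FF p f n (ext n u) * p (f true n fun i : Fin n => (ext n u) i) y +
            W p f true n (ext n u) * (p (f true n fun i : Fin n => (ext n u) i) y *
              Real.log (p (f true n fun i : Fin n => (ext n u) i) y /
                p (f false n fun i : Fin n => (ext n u) i) y))) :=
            Finset.sum_congr rfl fun y _ => hFF y
        _ = FF p f n (ext n u) + W p f true n (ext n u) *
            dd p (f true n fun i : Fin n => (ext n u) i) (f false n fun i : Fin n => (ext n u) i) := by
            rw [Finset.sum_add_distrib, ← Finset.mul_sum, ← Finset.mul_sum, hsum, mul_one, dd]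
    · rw [if_neg hc]
      exact Finset.sum_eq_zero fun y _ => if_neg (fun h => hc ((halive y).mp h))
  -- assemble
  rw [h0, h1, h2]
  rw [Finset.sum_congr rfl fun u _ => key u]
  rw [← Finset.sum_filter]
  rw [Finset.sum_add_distrib]
  have hsplit : ∑ u ∈ Finset.univ.filter
        (fun u : Fin n → Y => n ≤ T (ext n u) ∧ ¬ T (ext n u) = n), FF p f n (ext n u)
      = AA p f T n - GG p f T n := by
    have hsub : Finset.univ.filter (fun u : Fin n → Y => T (ext n u) = n) ⊆
        Finset.univ.filter (fun u : Fin n → Y => n ≤ T (ext n u)) := by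
      intro u hu
      simp only [Finset.mem_filter, Finset.mem_univ, true_and] at hu ⊢
      omega
    have hdiff : Finset.univ.filter
          (fun u : Fin n → Y => n ≤ T (ext n u) ∧ ¬ T (ext n u) = n)
        = Finset.univ.filter (fun u : Fin n → Y => n ≤ T (ext n u)) \
          Finset.univ.filter (fun u : Fin n → Y => T (ext n u) = n) := by
      ext u
      simp only [Finset.mem_filter, Finset.mem_univ, true_and, Finset.mem_sdiff]
    rw [hdiff, Finset.sum_sdiff_eq_sub hsub, AA, GG]
  rw [hsplit, RR]


theorem telescope [Fintype X] [Fintype Y] [Nonempty Y]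
    (hpos : ∀ x y, 0 < p x y) (hsum : ∀ x, ∑ y, p x y = 1)
    (T : (ℕ → Y) → ℕ)
    (hstop : ∀ (n : ℕ) (ω ω' : ℕ → Y), (∀ i < n, ω i = ω' i) → (T ω = n ↔ T ω' = n))
    (N : ℕ) :
    ∑ n ∈ Finset.range N, GG p f T n = -(AA p f T N) + ∑ n ∈ Finset.range N, RR p f T n := by
  induction N with
  | zero => simp [AA_zero]
  | succ N ih =>
    rw [Finset.sum_range_succ, Finset.sum_range_succ, ih]
    have := step p f hpos hsum T hstop N
    linarith [this]

end Stmt5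



section tails
variable {α : Type*} [MeasurableSpace α] (μ : Measure α) [IsProbabilityMeasure μ]
  (T : α → ℕ) (hm : ∀ n, MeasurableSet {ω | n ≤ T ω})

theorem meas_tail_eq_integral (n : ℕ) (s : Set α) (hs : MeasurableSet s) :
    (μ s).toReal = ∫ ω, Set.indicator s (fun _ => (1:ℝ)) ω ∂μ := by
  rw [integral_indicator_const (1:ℝ) hs, smul_eq_mul, mul_one]
  rfl

include hm in
theorem sum_tail_le (hT : Integrable (fun ω => (T ω : ℝ)) μ) (N : ℕ) :
    ∑ n ∈ Finset.range N, (μ {ω | n + 1 ≤ T ω}).toReal ≤ ∫ ω, (T ω : ℝ) ∂μ := by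
  classical
  have hint : ∀ n : ℕ, Integrable (Set.indicator {ω | n + 1 ≤ T ω} (fun _ => (1:ℝ))) μ :=
    fun n => (integrable_const (1:ℝ)).indicator (hm (n+1))
  calc ∑ n ∈ Finset.range N, (μ {ω | n + 1 ≤ T ω}).toReal
      = ∑ n ∈ Finset.range N, ∫ ω, Set.indicator {ω | n + 1 ≤ T ω} (fun _ => (1:ℝ)) ω ∂μ :=
        Finset.sum_congr rfl fun n _ => meas_tail_eq_integral μ (n+1) _ (hm (n+1))
    _ = ∫ ω, ∑ n ∈ Finset.range N, Set.indicator {ω | n + 1 ≤ T ω} (fun _ => (1:ℝ)) ω ∂μ :=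
        (integral_finset_sum _ fun n _ => hint n).symm
    _ ≤ ∫ ω, (T ω : ℝ) ∂μ := by
        refine integral_mono (integrable_finset_sum _ fun n _ => hint n) hT fun ω => ?_
        have h1 : ∀ n, Set.indicator {ω | n + 1 ≤ T ω} (fun _ => (1:ℝ)) ω
            = if n < T ω then (1:ℝ) else 0 := by
          intro n
          rw [Set.indicator_apply]
          simp [Nat.succ_le_iff]
        simp only [h1, Finset.sum_boole]
        have h2 : (Finset.range N).filter (fun n => n < T ω) = Finset.range (min (T ω) N) := by
          ext a; simp only [Finset.mem_filter, Finset.mem_range, Finset.mem_inter]; omega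
        rw [h2, Finset.card_range]
        exact_mod_cast min_le_left (T ω) N

include hm in
theorem meas_eq_measurable (n : ℕ) : MeasurableSet {ω | T ω = n} := by
  have : {ω | T ω = n} = {ω | n ≤ T ω} \ {ω | n + 1 ≤ T ω} := by
    ext ω; simp only [Set.mem_setOf_eq, Set.mem_diff]; omega
  rw [this]; exact (hm n).diff (hm (n+1))

include hm in
theorem summable_mul_meas (hT : Integrable (fun ω => (T ω : ℝ)) μ) :
    Summable (fun n : ℕ => (n : ℝ) * (μ {ω | T ω = n}).toReal) := by
  classical
  refine summable_of_sum_range_le (fun n => by positivity) (c := ∫ ω, (T ω : ℝ) ∂μ) fun N => ?_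
  have hint : ∀ n : ℕ, Integrable (Set.indicator {ω | T ω = n} (fun _ => (n:ℝ))) μ :=
    fun n => (integrable_const ((n:ℝ))).indicator (meas_eq_measurable T hm n)
  calc ∑ n ∈ Finset.range N, (n : ℝ) * (μ {ω | T ω = n}).toReal
      = ∑ n ∈ Finset.range N, ∫ ω, Set.indicator {ω | T ω = n} (fun _ => (n:ℝ)) ω ∂μ := by
        refine Finset.sum_congr rfl fun n _ => ?_
        rw [integral_indicator_const ((n:ℝ)) (meas_eq_measurable T hm n), smul_eq_mul, mul_comm]
        rfl
    _ = ∫ ω, ∑ n ∈ Finset.range N, Set.indicator {ω | T ω = n} (fun _ => (n:ℝ)) ω ∂μ :=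
        (integral_finset_sum _ fun n _ => hint n).symm
    _ ≤ ∫ ω, (T ω : ℝ) ∂μ := by
        refine integral_mono (integrable_finset_sum _ fun n _ => hint n) hT fun ω => ?_
        have h1 : ∀ n, Set.indicator {ω | T ω = n} (fun _ => (n:ℝ)) ω
            = if n = T ω then (n : ℝ) else 0 := by
          intro n; rw [Set.indicator_apply]; simp [eq_comm]
        simp only [h1, Finset.sum_ite_eq' (Finset.range N) (T ω) (fun n => (n:ℝ))]
        split <;> simp

include hm in
theorem tail_tendsto_zero :
    Filter.Tendsto (fun N : ℕ => (μ {ω | N ≤ T ω}).toReal) Filter.atTop (nhds 0) := by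
  have h0 : Filter.Tendsto (fun N : ℕ => μ {ω | N ≤ T ω}) Filter.atTop
      (nhds (μ (⋂ N : ℕ, {ω | N ≤ T ω}))) := by
    refine tendsto_measure_iInter_atTop (fun n => (hm n).nullMeasurableSet)
      (fun a b hab => fun ω hω => ?_) ⟨0, measure_ne_top μ _⟩
    exact le_trans hab hω
  have h1 : (⋂ N : ℕ, {ω | N ≤ T ω}) = ∅ := by
    ext ω; simp only [Set.mem_iInter, Set.mem_setOf_eq, Set.mem_empty_iff_false, iff_false,
      not_forall, not_le]
    exact ⟨T ω + 1, by omega⟩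
  rw [h1, measure_empty] at h0
  have := (ENNReal.tendsto_toReal (by simp : (0:ENNReal) ≠ ⊤)).comp h0
  exact this

end tails


/-- For any binary hypothesis testing scheme over a DMC with feedback, with stopping time `T`
of finite expectation, the divergence between the stopped output distributions under the two
hypotheses satisfies `D(P_A ‖ P_N) ≤ C₁ E[T | A]`, where
`C₁ = max_{x,x'} D(p(·|x) ‖ p(·|x'))`. -/
theorem stmt5 {X Y : Type*} [Fintype X] [Fintype Y] [Nonempty X] [Nonempty Y]
    [MeasurableSpace Y] [MeasurableSingletonClass Y]
    (p : X → Y → ℝ) (hpos : ∀ x y, 0 < p x y) (hsum : ∀ x, ∑ y, p x y = 1)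
    (f : Bool → (n : ℕ) → (Fin n → Y) → X)
    (μA μN : Measure (ℕ → Y)) [IsProbabilityMeasure μA] [IsProbabilityMeasure μN]
    (hA : ∀ (n : ℕ) (v : ℕ → Y),
      μA (cylinder (n + 1) v) =
        μA (cylinder n v) * ENNReal.ofReal (p (f true n fun i => v i) (v n)))
    (hN : ∀ (n : ℕ) (v : ℕ → Y),
      μN (cylinder (n + 1) v) =
        μN (cylinder n v) * ENNReal.ofReal (p (f false n fun i => v i) (v n)))
    (T : (ℕ → Y) → ℕ)
    (hstop : ∀ (n : ℕ) (ω ω' : ℕ → Y), (∀ i < n, ω i = ω' i) → (T ω = n ↔ T ω' = n))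
    (hTA : Integrable (fun ω => (T ω : ℝ)) μA)
    (hTN : Integrable (fun ω => (T ω : ℝ)) μN) :
    (∑' s : Σ n, Fin n → Y,
        (μA (stopCell T s)).toReal *
          Real.log ((μA (stopCell T s)).toReal / (μN (stopCell T s)).toReal))
      ≤ (⨆ x, ⨆ x', ∑ y, p x y * Real.log (p x y / p x' y)) * ∫ ω, (T ω : ℝ) ∂μA := by
  set C := (⨆ x, ⨆ x', ∑ y, p x y * Real.log (p x y / p x' y)) with hC
  -- C bounds
  have hddC : ∀ x x', Stmt5.dd p x x' ≤ C := by
    intro x x'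
    rw [hC]
    calc Stmt5.dd p x x' = ∑ y, p x y * Real.log (p x y / p x' y) := rfl
      _ ≤ ⨆ x', ∑ y, p x y * Real.log (p x y / p x' y) :=
        le_ciSup (f := fun x' => ∑ y, p x y * Real.log (p x y / p x' y))
          (Set.Finite.bddAbove (Set.finite_range _)) x'
      _ ≤ ⨆ x, ⨆ x', ∑ y, p x y * Real.log (p x y / p x' y) :=
        le_ciSup (f := fun x => ⨆ x', ∑ y, p x y * Real.log (p x y / p x' y))
          (Set.Finite.bddAbove (Set.finite_range _)) x
  have hC0 : 0 ≤ C := by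
    obtain x0 := Classical.arbitrary X
    have h0 : Stmt5.dd p x0 x0 = 0 := by
      simp [Stmt5.dd, div_self (hpos x0 _).ne']
    linarith [hddC x0 x0]
  -- measurability of tail sets
  have hmeas_ge : ∀ n : ℕ, MeasurableSet {ω : ℕ → Y | n ≤ T ω} := fun n =>
    Stmt5.measurableSet_invariant n (fun ω => n ≤ T ω)
      (fun ω ω' h => Stmt5.T_congr_ge T hstop n ω ω' h)
  -- cell values
  have hcellA : ∀ (n : ℕ) (u : Fin n → Y), (μA (stopCell T ⟨n, u⟩)).toReal =
      if T (Stmt5.ext n u) = n then Stmt5.W p f true n (Stmt5.ext n u) else 0 :=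
    fun n u => Stmt5.cell_meas p f hpos true μA hA T hstop n u
  have hcellN : ∀ (n : ℕ) (u : Fin n → Y), (μN (stopCell T ⟨n, u⟩)).toReal =
      if T (Stmt5.ext n u) = n then Stmt5.W p f false n (Stmt5.ext n u) else 0 :=
    fun n u => Stmt5.cell_meas p f hpos false μN hN T hstop n u
  have hgval : ∀ s : Σ n, Fin n → Y,
      (μA (stopCell T s)).toReal *
        Real.log ((μA (stopCell T s)).toReal / (μN (stopCell T s)).toReal)
      = if T (Stmt5.ext s.1 s.2) = s.1 then Stmt5.FF p f s.1 (Stmt5.ext s.1 s.2) else 0 := by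
    rintro ⟨n, u⟩
    rw [hcellA n u, hcellN n u]
    by_cases h : T (Stmt5.ext n u) = n
    · simp only [if_pos h]
      rfl
    · simp only [if_neg h]
      simp
  -- the key finite-N bound
  have hkey : ∀ N : ℕ, ∑ n ∈ Finset.range N, Stmt5.GG p f T n ≤
      (μN {ω : ℕ → Y | N ≤ T ω}).toReal + C * ∫ ω, (T ω : ℝ) ∂μA := by
    intro N
    rw [Stmt5.telescope p f hpos hsum T hstop N]
    have hAN : -(Stmt5.AA p f T N) ≤ (μN {ω : ℕ → Y | N ≤ T ω}).toReal := by
      have hQ : ∀ ω ω' : ℕ → Y, (∀ i < N, ω i = ω' i) → ((N ≤ T ω) ↔ (N ≤ T ω')) :=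
        fun ω ω' h => Stmt5.T_congr_ge T hstop N ω ω' h
      have e1 := Stmt5.meas_toReal p f hpos true μA hA N (fun ω => N ≤ T ω) hQ
      have e2 := Stmt5.meas_toReal p f hpos false μN hN N (fun ω => N ≤ T ω) hQ
      beta_reduce at e1 e2
      have h3 : (μA {ω : ℕ → Y | N ≤ T ω}).toReal - (μN {ω : ℕ → Y | N ≤ T ω}).toReal ≤
          Stmt5.AA p f T N := by
        rw [e1, e2, ← Finset.sum_sub_distrib, Stmt5.AA]
        apply Finset.sum_le_sum
        intro u _
        exact Stmt5.mul_log_div_ge (Stmt5.W_pos p f hpos true N _)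
          (Stmt5.W_pos p f hpos false N _)
      have h4 : 0 ≤ (μA {ω : ℕ → Y | N ≤ T ω}).toReal := ENNReal.toReal_nonneg
      linarith
    have hRR : ∀ n : ℕ, Stmt5.RR p f T n ≤ C * (μA {ω : ℕ → Y | n + 1 ≤ T ω}).toReal := by
      intro n
      have hq : {ω : ℕ → Y | n + 1 ≤ T ω} = {ω : ℕ → Y | n ≤ T ω ∧ ¬ T ω = n} := by
        ext ω; simp only [Set.mem_setOf_eq]; omega
      have hQ : ∀ ω ω' : ℕ → Y, (∀ i < n, ω i = ω' i) →
          ((n ≤ T ω ∧ ¬ T ω = n) ↔ (n ≤ T ω' ∧ ¬ T ω' = n)) := by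
        intro ω ω' h
        rw [Stmt5.T_congr_ge T hstop n ω ω' h, hstop n ω ω' h]
      have e3 := Stmt5.meas_toReal p f hpos true μA hA n (fun ω => n ≤ T ω ∧ ¬ T ω = n) hQ
      beta_reduce at e3
      rw [hq, e3, Finset.mul_sum, Stmt5.RR]
      apply Finset.sum_le_sum
      intro u _
      rw [mul_comm C]
      exact mul_le_mul_of_nonneg_left (hddC _ _) (Stmt5.W_pos p f hpos true n _).le
    have hsumRR : ∑ n ∈ Finset.range N, Stmt5.RR p f T n ≤ C * ∫ ω, (T ω : ℝ) ∂μA := by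
      calc ∑ n ∈ Finset.range N, Stmt5.RR p f T n
          ≤ ∑ n ∈ Finset.range N, C * (μA {ω : ℕ → Y | n + 1 ≤ T ω}).toReal :=
            Finset.sum_le_sum fun n _ => hRR n
        _ = C * ∑ n ∈ Finset.range N, (μA {ω : ℕ → Y | n + 1 ≤ T ω}).toReal := by
            rw [Finset.mul_sum]
        _ ≤ C * ∫ ω, (T ω : ℝ) ∂μA :=
            mul_le_mul_of_nonneg_left (sum_tail_le μA T hmeas_ge hTA N) hC0
    linarith
  -- summability
  set M := ∑ z : X × X × Y, |Real.log (p z.1 z.2.2 / p z.2.1 z.2.2)| with hMdef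
  have hM : ∀ (x x' : X) (y : Y), |Real.log (p x y / p x' y)| ≤ M := fun x x' y =>
    Finset.single_le_sum (f := fun z : X × X × Y => |Real.log (p z.1 z.2.2 / p z.2.1 z.2.2)|)
      (fun z _ => abs_nonneg _) (Finset.mem_univ (x, x', y))
  have hlog := Stmt5.abs_logW p f hpos hM
  have hfiber : ∀ n : ℕ, ∑ u : Fin n → Y, (μA (stopCell T ⟨n, u⟩)).toReal =
      (μA {ω : ℕ → Y | T ω = n}).toReal := by
    intro n
    have e4 := Stmt5.meas_toReal p f hpos true μA hA n (fun ω => T ω = n) (hstop n)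
    beta_reduce at e4
    rw [e4, Finset.sum_filter]
    exact Finset.sum_congr rfl fun u _ => hcellA n u
  have hmaj : Summable (fun s : Σ n, Fin n → Y => (μA (stopCell T s)).toReal * (s.1 * M)) := by
    refine (summable_sigma_of_nonneg fun s => by positivity).mpr ⟨fun n => Summable.of_finite, ?_⟩
    refine Summable.congr (((summable_mul_meas μA T hmeas_ge hTA).mul_right M)) fun n => ?_
    rw [tsum_fintype]
    show _ = ∑ u : Fin n → Y, (μA (stopCell T ⟨n, u⟩)).toReal * ((n : ℝ) * M)
    rw [← Finset.sum_mul, hfiber n]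
    ring
  have habs : ∀ s : Σ n, Fin n → Y,
      |(μA (stopCell T s)).toReal *
        Real.log ((μA (stopCell T s)).toReal / (μN (stopCell T s)).toReal)|
      ≤ (μA (stopCell T s)).toReal * (s.1 * M) := by
    rintro ⟨n, u⟩
    rw [hgval ⟨n, u⟩]
    by_cases h : T (Stmt5.ext n u) = n
    · rw [if_pos h]
      have hW0 := Stmt5.W_pos p f hpos true n (Stmt5.ext n u)
      rw [hcellA n u, if_pos h, Stmt5.FF, abs_mul, abs_of_nonneg hW0.le]
      exact mul_le_mul_of_nonneg_left (hlog n (Stmt5.ext n u)) hW0.le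
    · rw [if_neg h]
      simp only [abs_zero]
      positivity
  have hgsum : Summable (fun s : Σ n, Fin n → Y =>
      (μA (stopCell T s)).toReal *
        Real.log ((μA (stopCell T s)).toReal / (μN (stopCell T s)).toReal)) :=
    (Summable.of_nonneg_of_le (fun s => abs_nonneg _) habs hmaj).of_abs
  have hlevel : ∀ n : ℕ, ∑' u : Fin n → Y,
      (μA (stopCell T ⟨n, u⟩)).toReal *
        Real.log ((μA (stopCell T ⟨n, u⟩)).toReal / (μN (stopCell T ⟨n, u⟩)).toReal)
      = Stmt5.GG p f T n := by
    intro n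
    rw [tsum_fintype, Stmt5.GG, Finset.sum_filter]
    exact Finset.sum_congr rfl fun u _ => hgval ⟨n, u⟩
  have htsum : (∑' s : Σ n, Fin n → Y,
      (μA (stopCell T s)).toReal *
        Real.log ((μA (stopCell T s)).toReal / (μN (stopCell T s)).toReal))
      = ∑' n : ℕ, Stmt5.GG p f T n := by
    rw [hgsum.tsum_sigma]
    exact tsum_congr hlevel
  have hGsum : Summable (Stmt5.GG p f T) := hgsum.sigma.congr hlevel
  -- pass to the limit
  have hps := hGsum.hasSum.tendsto_sum_nat
  have hTail := tail_tendsto_zero μN T hmeas_ge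
  have hlim : Filter.Tendsto
      (fun N : ℕ => (μN {ω : ℕ → Y | N ≤ T ω}).toReal + C * ∫ ω, (T ω : ℝ) ∂μA)
      Filter.atTop (nhds (0 + C * ∫ ω, (T ω : ℝ) ∂μA)) :=
    hTail.add_const _
  have hfin : ∑' n : ℕ, Stmt5.GG p f T n ≤ 0 + C * ∫ ω, (T ω : ℝ) ∂μA :=
    le_of_tendsto_of_tendsto' hps hlim hkey
  rw [htsum]
  linarith
end

section
/- Let P and Q be probability measures, S a measurable set, and suppose D(P||Q) ≤ K. Then K ≥ −P(S) ln Q(S) − h(P(S^c)), where h is the binary entropy function h(p) = −p ln p − (1−p) ln(1−p). -/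
open MeasureTheory Classical

/-- Kullback-Leibler divergence between two measures, valued in `EReal`, equal to `⊤`
unless `P ≪ Q` and the log-likelihood ratio is integrable. -/

noncomputable def klDivM {Ω : Type*} [MeasurableSpace Ω] (P Q : Measure Ω) : EReal :=
  if P ≪ Q ∧ Integrable (llr P Q) P then ((∫ ω, llr P Q ω ∂P : ℝ) : EReal) else ⊤

/-- The natural-log binary entropy function, with `h(0) = h(1) = 0`. -/
noncomputable def binEnt (x : ℝ) : ℝ := -(x * Real.log x) - (1 - x) * Real.log (1 - x)

lemma lemA {Ω : Type*} [MeasurableSpace Ω] (P Q : Measure Ω)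
    [IsFiniteMeasure P] [IsFiniteMeasure Q] (h : P ≪ Q)
    {T : Set Ω} (hT : MeasurableSet T) :
    ∫⁻ x in T, ENNReal.ofReal (((P.rnDeriv Q x).toReal)⁻¹) ∂P ≤ Q T := by
  have hmeas := Measure.measurable_rnDeriv P Q
  have h1 : ∫⁻ x in T, ENNReal.ofReal (((P.rnDeriv Q x).toReal)⁻¹) ∂P
      = ∫⁻ x in T, (P.rnDeriv Q x)⁻¹ ∂P := by
    refine lintegral_congr_ae (ae_restrict_of_ae ?_)
    filter_upwards [Measure.rnDeriv_pos h, h.ae_le (Measure.rnDeriv_lt_top P Q)]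
      with x hpos htop
    rw [← ENNReal.toReal_inv, ENNReal.ofReal_toReal]
    simp [hpos.ne']
  rw [h1]
  have h2 : ∫⁻ x in T, (P.rnDeriv Q x)⁻¹ ∂P
      = ∫⁻ x in T, P.rnDeriv Q x * (P.rnDeriv Q x)⁻¹ ∂Q := by
    nth_rewrite 1 [← Measure.withDensity_rnDeriv_eq P Q h]
    rw [restrict_withDensity hT, lintegral_withDensity_eq_lintegral_mul _ hmeas
      (by fun_prop)]
    rfl
  rw [h2]
  calc ∫⁻ x in T, P.rnDeriv Q x * (P.rnDeriv Q x)⁻¹ ∂Q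
      ≤ ∫⁻ _ in T, 1 ∂Q := lintegral_mono fun x => ENNReal.mul_inv_le_one _
    _ = Q T := setLIntegral_one T

lemma lemB {Ω : Type*} [MeasurableSpace Ω] (P Q : Measure Ω)
    [IsFiniteMeasure P] [IsFiniteMeasure Q] (h : P ≪ Q)
    {T : Set Ω} (hT : MeasurableSet T) :
    IntegrableOn (fun x => ((P.rnDeriv Q x).toReal)⁻¹) T P ∧
    ∫ x in T, ((P.rnDeriv Q x).toReal)⁻¹ ∂P ≤ (Q T).toReal := by
  set g : Ω → ℝ := fun x => ((P.rnDeriv Q x).toReal)⁻¹ with hg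
  have hgm : Measurable g := (Measure.measurable_rnDeriv P Q).ennreal_toReal.inv
  have hg0 : ∀ x, 0 ≤ g x := fun x => inv_nonneg.2 ENNReal.toReal_nonneg
  have hfin : ∫⁻ x in T, ENNReal.ofReal (g x) ∂P < ⊤ :=
    lt_of_le_of_lt (lemA P Q h hT) (measure_lt_top Q T)
  have hint : IntegrableOn g T P := by
    refine ⟨hgm.aestronglyMeasurable, ?_⟩
    rw [hasFiniteIntegral_iff_norm]
    simpa [abs_of_nonneg (hg0 _)] using hfin
  refine ⟨hint, ?_⟩
  have := integral_eq_lintegral_of_nonneg_ae (μ := P.restrict T)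
    (ae_of_all _ hg0) hgm.aestronglyMeasurable
  rw [this]
  exact ENNReal.toReal_mono (measure_ne_top Q T) (lemA P Q h hT)

lemma keyLem {Ω : Type*} [MeasurableSpace Ω] (P Q : Measure Ω)
    [IsProbabilityMeasure P] [IsProbabilityMeasure Q] (h : P ≪ Q)
    (hint : Integrable (llr P Q) P) {T : Set Ω} (hT : MeasurableSet T) :
    (P T).toReal * (Real.log (P T).toReal - Real.log (Q T).toReal)
      ≤ ∫ x in T, llr P Q x ∂P := by
  by_cases hPT : P T = 0
  · have : P.restrict T = 0 := Measure.restrict_eq_zero.2 hPT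
    rw [hPT, this]
    simp
  have hQT : Q T ≠ 0 := fun hq => hPT (h hq)
  set p := (P T).toReal with hp
  set q := (Q T).toReal with hqdef
  have hp0 : 0 < p := ENNReal.toReal_pos hPT (measure_ne_top P T)
  have hq0 : 0 < q := ENNReal.toReal_pos hQT (measure_ne_top Q T)
  set c := p / q with hc
  have hc0 : 0 < c := div_pos hp0 hq0
  set g : Ω → ℝ := fun x => ((P.rnDeriv Q x).toReal)⁻¹ with hgdef
  have hpb : ∀ᵐ x ∂(P.restrict T), Real.log c + 1 - c * g x ≤ llr P Q x := by
    refine ae_restrict_of_ae ?_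
    filter_upwards [Measure.rnDeriv_pos h, h.ae_le (Measure.rnDeriv_lt_top P Q)]
      with x hpos htop
    set t := (P.rnDeriv Q x).toReal with ht
    have ht0 : 0 < t := ENNReal.toReal_pos hpos.ne' htop.ne
    have hlog : Real.log (c / t) ≤ c / t - 1 :=
      Real.log_le_sub_one_of_pos (div_pos hc0 ht0)
    rw [Real.log_div hc0.ne' ht0.ne'] at hlog
    have hllr : llr P Q x = Real.log t := rfl
    rw [hllr]
    have hdiv : c / t = c * t⁻¹ := div_eq_mul_inv c t
    linarith [hlog, hdiv ▸ hlog]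
  have hB := lemB P Q h hT
  have hint1 : IntegrableOn (fun x => Real.log c + 1 - c * g x) T P :=
    (integrableOn_const (measure_ne_top _ _)).sub (hB.1.const_mul c)
  have hmono : ∫ x in T, (Real.log c + 1 - c * g x) ∂P ≤ ∫ x in T, llr P Q x ∂P :=
    integral_mono_ae hint1 hint.integrableOn hpb
  have hEval : ∫ x in T, (Real.log c + 1 - c * g x) ∂P
      = (Real.log c + 1) * p - c * ∫ x in T, g x ∂P := by
    rw [integral_sub (integrableOn_const (C := Real.log c + 1) (measure_ne_top _ _))
      (hB.1.const_mul c), integral_const, integral_const_mul]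
    simp [hp, mul_comm, measureReal_def, hgdef]
  have hgle : c * ∫ x in T, g x ∂P ≤ c * q :=
    mul_le_mul_of_nonneg_left hB.2 hc0.le
  have hfinal : (Real.log c + 1) * p - c * q ≤ ∫ x in T, llr P Q x ∂P := by
    calc (Real.log c + 1) * p - c * q
        ≤ (Real.log c + 1) * p - c * ∫ x in T, g x ∂P := by linarith
      _ = ∫ x in T, (Real.log c + 1 - c * g x) ∂P := hEval.symm
      _ ≤ _ := hmono
  have hcq : c * q = p := div_mul_cancel₀ p hq0.ne'
  have hlogc : Real.log c = Real.log p - Real.log q := Real.log_div hp0.ne' hq0.ne'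
  calc p * (Real.log p - Real.log q) = (Real.log c + 1) * p - c * q := by
        rw [hcq, hlogc]; ring
    _ ≤ _ := hfinal

/-- If `D(P‖Q) ≤ K` then `K ≥ −P(S) ln Q(S) − h(P(Sᶜ))`. -/
theorem stmt7 {Ω : Type*} [MeasurableSpace Ω] (P Q : Measure Ω)
    [IsProbabilityMeasure P] [IsProbabilityMeasure Q]
    (S : Set Ω) (hS : MeasurableSet S)
    (K : ℝ) (hK : klDivM P Q ≤ (K : EReal)) :
    -((P S).toReal * Real.log ((Q S).toReal) ) - binEnt ((P Sᶜ).toReal) ≤ K := by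
  by_cases hc : P ≪ Q ∧ Integrable (llr P Q) P
  swap
  · rw [klDivM, if_neg hc] at hK
    exact absurd hK (by simp [EReal.coe_lt_top])
  obtain ⟨hPQ, hint⟩ := hc
  rw [klDivM, if_pos ⟨hPQ, hint⟩, EReal.coe_le_coe_iff] at hK
  have hsplit : ∫ x in S, llr P Q x ∂P + ∫ x in Sᶜ, llr P Q x ∂P = ∫ x, llr P Q x ∂P :=
    integral_add_compl hS hint
  set pS := (P S).toReal with hpS
  set pC := (P Sᶜ).toReal with hpC
  set qS := (Q S).toReal with hqS
  set qC := (Q Sᶜ).toReal with hqC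
  have hsum : pC = 1 - pS := by
    rw [hpC, prob_compl_eq_one_sub hS, hpS,
      ENNReal.toReal_sub_of_le prob_le_one (by simp)]
    simp
  have h1 : pS * (Real.log pS - Real.log qS) ≤ ∫ x in S, llr P Q x ∂P :=
    keyLem P Q hPQ hint hS
  have h2 : pC * (Real.log pC - Real.log qC) ≤ ∫ x in Sᶜ, llr P Q x ∂P :=
    keyLem P Q hPQ hint hS.compl
  have hqC1 : qC ≤ 1 := by
    rw [hqC]; exact ENNReal.toReal_le_of_le_ofReal zero_le_one (by simpa using prob_le_one)
  have hlogqC : Real.log qC ≤ 0 := Real.log_nonpos ENNReal.toReal_nonneg hqC1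
  have hpC0 : 0 ≤ pC := ENNReal.toReal_nonneg
  have hbin : binEnt pC = -(pC * Real.log pC) - pS * Real.log pS := by
    rw [binEnt, hsum]; ring_nf
  rw [hbin]
  have hnp : pC * Real.log qC ≤ 0 := mul_nonpos_of_nonneg_of_nonpos hpC0 hlogqC
  nlinarith [h1, h2, hsplit, hK, hnp]
end

section
/- The error probability of a binary hypothesis test performed across a DMC with feedback using a variable-length code with stopping time T of finite expectation is lower bounded by P_e ≥ ( min{p_A, p_N} / 4 ) · exp( − C_1 · E[T] ), where p_A and p_N are the prior probabilities of the two hypotheses. -/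
open MeasureTheory
open scoped BigOperators

section DMCAux
set_option linter.unusedSectionVars false

open scoped Classical

variable {Y : Type*} [Nonempty Y]

/-- Extend a finite tuple to an infinite sequence by a junk value. -/
noncomputable def ext0 (n : ℕ) (v : Fin n → Y) : ℕ → Y :=
  fun i => if h : i < n then v ⟨i, h⟩ else Classical.arbitrary Y

lemma ext0_lt {n : ℕ} (v : Fin n → Y) {i : ℕ} (h : i < n) : ext0 n v i = v ⟨i, h⟩ :=
  dif_pos h

lemma restrict_ext0 {n : ℕ} (v : Fin n → Y) : (fun i : Fin n => ext0 n v i) = v := by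
  funext i; simp [ext0_lt v i.isLt]

lemma ext0_snoc_lt {n : ℕ} (v : Fin n → Y) (y : Y) {i : ℕ} (h : i < n) :
    ext0 (n + 1) (Fin.snoc v y) i = ext0 n v i := by
  rw [ext0_lt _ (h.trans (Nat.lt_succ_self n)), ext0_lt _ h]
  have : (⟨i, h.trans (Nat.lt_succ_self n)⟩ : Fin (n+1)) = Fin.castSucc ⟨i, h⟩ := rfl
  rw [this, Fin.snoc_castSucc]

lemma ext0_snoc_last {n : ℕ} (v : Fin n → Y) (y : Y) :
    ext0 (n + 1) (Fin.snoc v y) n = y := by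
  rw [ext0_lt _ (Nat.lt_succ_self n)]
  have : (⟨n, Nat.lt_succ_self n⟩ : Fin (n+1)) = Fin.last n := rfl
  rw [this, Fin.snoc_last]

/-- The snoc equivalence `(Fin n → Y) × Y ≃ (Fin (n+1) → Y)`. -/
def snocEquiv (n : ℕ) (Y : Type*) : (Fin n → Y) × Y ≃ (Fin (n + 1) → Y) where
  toFun uy := Fin.snoc uy.1 uy.2
  invFun w := (fun i => w i.castSucc, w (Fin.last n))
  left_inv uy := by
    ext i
    · simp [Fin.snoc_castSucc]
    · simp [Fin.snoc_last]
  right_inv w := by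
    simp [Fin.snoc_init_self]
    exact Fin.snoc_init_self w

lemma sum_snoc {M : Type*} [AddCommMonoid M] [Fintype Y] (n : ℕ)
    (F : (Fin (n + 1) → Y) → M) :
    (∑ w : Fin (n + 1) → Y, F w) = ∑ u : Fin n → Y, ∑ y : Y, F (Fin.snoc u y) := by
  rw [← (snocEquiv n Y).sum_comp F]
  rw [Fintype.sum_prod_type]
  rfl

/-- Product masses driven by a step kernel `κ`. -/
noncomputable def mass (κ : (n : ℕ) → (Fin n → Y) → Y → ℝ) : (n : ℕ) → (Fin n → Y) → ℝ
  | 0, _ => 1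
  | n + 1, v => mass κ n (fun i => v i.castSucc) * κ n (fun i => v i.castSucc) (v (Fin.last n))

lemma mass_snoc (κ : (n : ℕ) → (Fin n → Y) → Y → ℝ) (n : ℕ) (u : Fin n → Y) (y : Y) :
    mass κ (n + 1) (Fin.snoc u y) = mass κ n u * κ n u y := by
  simp [mass, Fin.snoc_castSucc, Fin.snoc_last]

lemma mass_pos {κ : (n : ℕ) → (Fin n → Y) → Y → ℝ} (hκ : ∀ n v y, 0 < κ n v y) :
    ∀ (n : ℕ) (v : Fin n → Y), 0 < mass κ n v
  | 0, _ => one_pos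
  | n + 1, v => mul_pos (mass_pos hκ n _) (hκ n _ _)

lemma sum_mass [Fintype Y] {κ : (n : ℕ) → (Fin n → Y) → Y → ℝ}
    (hκ : ∀ n v, ∑ y, κ n v y = 1) (n : ℕ) :
    ∑ v : Fin n → Y, mass κ n v = 1 := by
  induction n with
  | zero => simp [mass]
  | succ n ih =>
    rw [sum_snoc]
    have : ∀ u : Fin n → Y, ∑ y : Y, mass κ (n + 1) (Fin.snoc u y) = mass κ n u := by
      intro u
      simp only [mass_snoc, ← Finset.mul_sum, hκ n u, mul_one]
    simp only [this, ih]

section Meas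
variable [Fintype Y] [MeasurableSpace Y] [MeasurableSingletonClass Y]

lemma cylinder_zero (v : ℕ → Y) : cylinder 0 v = Set.univ := by
  ext ω; simp [_root_.cylinder]

lemma measurableSet_cylinder (n : ℕ) (v : ℕ → Y) : MeasurableSet (cylinder n v) := by
  have : cylinder n v = ⋂ i ∈ Set.Iio n, (fun ω : ℕ → Y => ω i) ⁻¹' {v i} := by
    ext ω; simp [_root_.cylinder]
  rw [this]
  exact MeasurableSet.biInter (Set.to_countable _)
    (fun i _ => (measurable_pi_apply i) (MeasurableSet.singleton (v i)))

lemma cylinder_congr {n : ℕ} {v w : ℕ → Y} (h : ∀ i < n, v i = w i) :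
    cylinder n v = cylinder n w := by
  ext ω
  constructor <;> intro hω i hi
  · rw [hω i hi, h i hi]
  · rw [hω i hi, h i hi]

lemma mem_cylinder_ext0 {n : ℕ} {v : Fin n → Y} {ω : ℕ → Y} :
    ω ∈ cylinder n (ext0 n v) ↔ (fun i : Fin n => ω i) = v := by
  constructor
  · intro h
    funext i
    rw [h i i.isLt, ext0_lt v i.isLt]
  · intro h i hi
    rw [ext0_lt v hi, ← h]

lemma self_mem_cylinder_restrict (n : ℕ) (ω : ℕ → Y) :
    ω ∈ cylinder n (ext0 n (fun i : Fin n => ω i)) :=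
  mem_cylinder_ext0.2 rfl

lemma cylinder_ext0_disjoint {n : ℕ} {v w : Fin n → Y} (h : v ≠ w) :
    Disjoint (cylinder n (ext0 n v)) (cylinder n (ext0 n w)) := by
  rw [Set.disjoint_left]
  intro ω hv hw
  exact h ((mem_cylinder_ext0.1 hv).symm.trans (mem_cylinder_ext0.1 hw))

/-- A set determined by the first `n` coordinates is a finite disjoint union of cylinders. -/
lemma set_eq_biUnion_cylinder (R : (ℕ → Y) → Prop) (n : ℕ)
    [inst : ∀ v : Fin n → Y, Decidable (R (ext0 n v))]
    (h : ∀ (v : Fin n → Y) (ω : ℕ → Y), ω ∈ cylinder n (ext0 n v) → (R ω ↔ R (ext0 n v))) :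
    {ω | R ω} =
      ⋃ v ∈ Finset.univ.filter (fun v : Fin n → Y => R (ext0 n v)), cylinder n (ext0 n v) := by
  ext ω
  simp only [Set.mem_setOf_eq, Set.mem_iUnion, Finset.mem_filter, Finset.mem_univ, true_and,
    exists_prop]
  constructor
  · intro hR
    refine ⟨fun i : Fin n => ω i, ?_, self_mem_cylinder_restrict n ω⟩
    exact (h _ ω (self_mem_cylinder_restrict n ω)).1 hR
  · rintro ⟨v, hv, hω⟩
    exact (h v ω hω).2 hv

lemma measure_biUnion_cyl (μ : Measure (ℕ → Y)) (n : ℕ) (P : (Fin n → Y) → Prop)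
    [DecidablePred P] :
    μ (⋃ v ∈ Finset.univ.filter (fun v : Fin n → Y => P v), cylinder n (ext0 n v)) =
      ∑ v ∈ Finset.univ.filter (fun v : Fin n → Y => P v), μ (cylinder n (ext0 n v)) := by
  refine measure_biUnion_finset ?_ (fun v _ => measurableSet_cylinder n (ext0 n v))
  intro v _ w _ hvw
  exact cylinder_ext0_disjoint hvw

variable {X : Type*}

lemma measure_cylinder_ext0 (p : X → Y → ℝ) (hpos : ∀ x y, 0 < p x y)
    (f : (n : ℕ) → (Fin n → Y) → X) (μ : Measure (ℕ → Y)) [IsProbabilityMeasure μ]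
    (hrec : ∀ (n : ℕ) (v : ℕ → Y),
      μ (cylinder (n + 1) v) = μ (cylinder n v) * ENNReal.ofReal (p (f n fun i => v i) (v n))) :
    ∀ (n : ℕ) (v : Fin n → Y),
      μ (cylinder n (ext0 n v)) = ENNReal.ofReal (mass (fun n v y => p (f n v) y) n v) := by
  intro n
  induction n with
  | zero =>
    intro v
    simp [cylinder_zero, mass]
  | succ n ih =>
    intro v
    set u : Fin n → Y := fun i => v i.castSucc with hu
    have h1 : cylinder n (ext0 (n + 1) v) = cylinder n (ext0 n u) := by
      refine cylinder_congr fun i hi => ?_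
      rw [ext0_lt v (hi.trans (Nat.lt_succ_self n)), ext0_lt u hi]
      rfl
    have h2 : (fun i : Fin n => ext0 (n + 1) v i) = u := by
      funext i
      rw [ext0_lt v (i.isLt.trans (Nat.lt_succ_self n))]
      rfl
    have h3 : ext0 (n + 1) v n = v (Fin.last n) := by
      rw [ext0_lt v (Nat.lt_succ_self n)]; rfl
    rw [hrec n (ext0 (n + 1) v), h1, h2, h3, ih u, ← ENNReal.ofReal_mul
      (le_of_lt (mass_pos (fun n v y => hpos (f n v) y) n u))]
    rfl

end Meas

section Stop
variable [Fintype Y] [MeasurableSpace Y] [MeasurableSingletonClass Y]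
variable {X : Type*} [Nonempty X]
variable (T : (ℕ → Y) → ℕ)
variable (hstop : ∀ (n : ℕ) (ω ω' : ℕ → Y), (∀ i < n, ω i = ω' i) → (T ω = n ↔ T ω' = n))

/-- The decision read off at the stopping time. -/
def Delta (d : (Σ n, Fin n → Y) → Bool) (ω : ℕ → Y) : Bool :=
  d ⟨T ω, fun i : Fin (T ω) => ω i⟩

lemma Delta_congr (d : (Σ n, Fin n → Y) → Bool) {ω ω' : ℕ → Y}
    (hT : T ω = T ω') (hag : ∀ i < T ω', ω i = ω' i) :
    Delta T d ω = Delta T d ω' := by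
  unfold Delta
  rw [hT]
  congr 1
  refine congrArg _ (funext fun i => hag i i.isLt)

include hstop

lemma T_eq_of_le {n : ℕ} {v : Fin n → Y} {ω : ℕ → Y}
    (hω : ω ∈ cylinder n (ext0 n v)) (hle : T ω ≤ n) : T (ext0 n v) = T ω :=
  (hstop (T ω) ω (ext0 n v) (fun i hi => hω i (lt_of_lt_of_le hi hle))).1 rfl

lemma T_eq_of_le' {n : ℕ} {v : Fin n → Y} {ω : ℕ → Y}
    (hω : ω ∈ cylinder n (ext0 n v)) (hle : T (ext0 n v) ≤ n) : T ω = T (ext0 n v) :=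
  (hstop (T (ext0 n v)) (ext0 n v) ω
    (fun i hi => (hω i (lt_of_lt_of_le hi hle)).symm)).1 rfl

lemma lt_T_transfer {n : ℕ} {v : Fin n → Y} {ω : ℕ → Y}
    (hω : ω ∈ cylinder n (ext0 n v)) : n < T ω ↔ n < T (ext0 n v) := by
  constructor
  · intro h
    by_contra hc
    push_neg at hc
    have := T_eq_of_le' T hstop hω hc
    omega
  · intro h
    by_contra hc
    push_neg at hc
    have := T_eq_of_le T hstop hω hc
    omega

lemma T_snoc_of_le {n : ℕ} {u : Fin n → Y} (y : Y) (h : T (ext0 n u) ≤ n) :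
    T (ext0 (n + 1) (Fin.snoc u y)) = T (ext0 n u) := by
  refine (hstop (T (ext0 n u)) (ext0 n u) (ext0 (n + 1) (Fin.snoc u y)) ?_).1 rfl
  intro i hi
  exact (ext0_snoc_lt u y (lt_of_lt_of_le hi h)).symm

lemma T_snoc_of_gt {n : ℕ} {u : Fin n → Y} (y : Y) (h : n < T (ext0 n u)) :
    n + 1 ≤ T (ext0 (n + 1) (Fin.snoc u y)) := by
  by_contra hc
  push_neg at hc
  have h2 : T (ext0 n u) = T (ext0 (n + 1) (Fin.snoc u y)) := by
    refine (hstop (T (ext0 (n + 1) (Fin.snoc u y))) (ext0 (n + 1) (Fin.snoc u y))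
      (ext0 n u) ?_).1 rfl
    intro i hi
    exact ext0_snoc_lt u y (by omega)
  omega

lemma T_front_of_ge {n : ℕ} {v : Fin (n + 1) → Y} (h : n + 1 ≤ T (ext0 (n + 1) v)) :
    n < T (ext0 n (fun i => v i.castSucc)) := by
  by_contra hc
  push_neg at hc
  have h2 : T (ext0 (n + 1) v) = T (ext0 n (fun i => v i.castSucc)) := by
    refine (hstop (T (ext0 n (fun i => v i.castSucc))) (ext0 n (fun i => v i.castSucc))
      (ext0 (n + 1) v) ?_).1 rfl
    intro i hi
    have hi' : i < n := by omega
    rw [ext0_lt _ hi', ext0_lt v (by omega : i < n + 1)]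
    rfl
  omega

omit hstop

variable (p : X → Y → ℝ) (f : Bool → (n : ℕ) → (Fin n → Y) → X)

/-- The original (unstopped) step kernel. -/
noncomputable def kerP (b : Bool) : (n : ℕ) → (Fin n → Y) → Y → ℝ :=
  fun n v y => p (f b n v) y

/-- The stopped step kernel: after the stopping time, both hypotheses transmit alike. -/
noncomputable def kerQ (b : Bool) : (n : ℕ) → (Fin n → Y) → Y → ℝ :=
  fun n v y => if n < T (ext0 n v) then p (f b n v) y else p (Classical.arbitrary X) y

include hstop in
lemma mass_kerQ_eq_of_le (b : Bool) :
    ∀ (n : ℕ) (v : Fin n → Y), n ≤ T (ext0 n v) →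
      mass (kerQ T p f b) n v = mass (kerP p f b) n v := by
  intro n
  induction n with
  | zero => intro v _; rfl
  | succ n ih =>
    intro v hv
    have hfront : n < T (ext0 n (fun i => v i.castSucc)) :=
      T_front_of_ge T hstop (by omega)
    show mass (kerQ T p f b) n _ * kerQ T p f b n _ _ = mass (kerP p f b) n _ * kerP p f b n _ _
    rw [ih _ (le_of_lt hfront)]
    congr 1
    unfold kerQ
    rw [if_pos hfront]
    rfl

end Stop

section Chain
variable [Fintype Y]

/-- Chain rule for the relative entropy of two product masses. -/
lemma chain_identity (κ₁ κ₂ : (n : ℕ) → (Fin n → Y) → Y → ℝ)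
    (h1 : ∀ n v y, 0 < κ₁ n v y) (h2 : ∀ n v y, 0 < κ₂ n v y)
    (hs1 : ∀ n v, ∑ y, κ₁ n v y = 1) :
    ∀ M : ℕ, ∑ w : Fin M → Y, mass κ₁ M w * Real.log (mass κ₁ M w / mass κ₂ M w)
      = ∑ m ∈ Finset.range M, ∑ u : Fin m → Y,
          mass κ₁ m u * ∑ y, κ₁ m u y * Real.log (κ₁ m u y / κ₂ m u y) := by
  intro M
  induction M with
  | zero => simp [mass]
  | succ M ih =>
    rw [sum_snoc, Finset.sum_range_succ, ← ih]
    have key : ∀ u : Fin M → Y,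
        ∑ y : Y, mass κ₁ (M + 1) (Fin.snoc u y) *
            Real.log (mass κ₁ (M + 1) (Fin.snoc u y) / mass κ₂ (M + 1) (Fin.snoc u y))
          = mass κ₁ M u * Real.log (mass κ₁ M u / mass κ₂ M u)
            + mass κ₁ M u * ∑ y, κ₁ M u y * Real.log (κ₁ M u y / κ₂ M u y) := by
      intro u
      have ha := mass_pos h1 M u
      have hb := mass_pos h2 M u
      have hstep : ∀ y : Y,
          mass κ₁ (M + 1) (Fin.snoc u y) *
              Real.log (mass κ₁ (M + 1) (Fin.snoc u y) / mass κ₂ (M + 1) (Fin.snoc u y))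
            = (mass κ₁ M u * Real.log (mass κ₁ M u / mass κ₂ M u)) * κ₁ M u y
              + mass κ₁ M u * (κ₁ M u y * Real.log (κ₁ M u y / κ₂ M u y)) := by
        intro y
        rw [mass_snoc, mass_snoc]
        have : mass κ₁ M u * κ₁ M u y / (mass κ₂ M u * κ₂ M u y)
            = (mass κ₁ M u / mass κ₂ M u) * (κ₁ M u y / κ₂ M u y) := by
          field_simp <;> ring
        rw [this, Real.log_mul (ne_of_gt (div_pos ha hb))
          (ne_of_gt (div_pos (h1 M u y) (h2 M u y)))]
        ring
      rw [Finset.sum_congr rfl fun y _ => hstep y, Finset.sum_add_distrib,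
        ← Finset.mul_sum, ← Finset.mul_sum, hs1 M u]
      ring
    rw [Finset.sum_congr rfl fun u _ => key u, Finset.sum_add_distrib]

/-- Jensen step: the Bhattacharyya sum is at least `exp(-D/2)`. -/
lemma exp_neg_div_le_sqrt_sum (κ₁ κ₂ : (n : ℕ) → (Fin n → Y) → Y → ℝ)
    (h1 : ∀ n v y, 0 < κ₁ n v y) (h2 : ∀ n v y, 0 < κ₂ n v y)
    (hs1 : ∀ n v, ∑ y, κ₁ n v y = 1) (M : ℕ) :
    Real.exp (-(∑ w : Fin M → Y, mass κ₁ M w * Real.log (mass κ₁ M w / mass κ₂ M w)) / 2)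
      ≤ ∑ w : Fin M → Y, Real.sqrt (mass κ₁ M w * mass κ₂ M w) := by
  set a : (Fin M → Y) → ℝ := mass κ₁ M with hadef
  set b : (Fin M → Y) → ℝ := mass κ₂ M with hbdef
  have hapos : ∀ w, 0 < a w := fun w => mass_pos h1 M w
  have hbpos : ∀ w, 0 < b w := fun w => mass_pos h2 M w
  set z : (Fin M → Y) → ℝ := fun w => Real.sqrt (b w / a w) with hzdef
  have hz : ∀ w, 0 < z w := fun w => Real.sqrt_pos.2 (div_pos (hbpos w) (hapos w))
  have hgm := Real.geom_mean_le_arith_mean_weighted Finset.univ a z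
    (fun w _ => (hapos w).le) (sum_mass hs1 M) (fun w _ => (hz w).le)
  have hright : ∑ w : Fin M → Y, a w * z w = ∑ w : Fin M → Y, Real.sqrt (a w * b w) := by
    refine Finset.sum_congr rfl fun w _ => ?_
    rw [hzdef]
    rw [show a w * Real.sqrt (b w / a w) = Real.sqrt ((a w) ^ 2) * Real.sqrt (b w / a w) by
      rw [Real.sqrt_sq (hapos w).le]]
    rw [← Real.sqrt_mul (sq_nonneg _)]
    congr 1
    field_simp [(hapos w).ne'] <;> ring
  have hleft : ∏ w : Fin M → Y, z w ^ a w
      = Real.exp (-(∑ w : Fin M → Y, a w * Real.log (a w / b w)) / 2) := by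
    have : ∀ w : Fin M → Y, z w ^ a w = Real.exp (a w * (-(Real.log (a w / b w)) / 2)) := by
      intro w
      rw [Real.rpow_def_of_pos (hz w)]
      congr 1
      rw [hzdef, Real.log_sqrt (div_pos (hbpos w) (hapos w)).le]
      rw [show b w / a w = (a w / b w)⁻¹ by field_simp]
      rw [Real.log_inv]
      ring
    rw [Finset.prod_congr rfl fun w _ => this w, ← Real.exp_sum]
    congr 1
    rw [Finset.sum_congr rfl fun (w : Fin M → Y) _ =>
      (by ring : a w * (-Real.log (a w / b w) / 2) = -(a w * Real.log (a w / b w)) / 2),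
      ← Finset.sum_div, Finset.sum_neg_distrib, neg_div]
  calc Real.exp (-(∑ w : Fin M → Y, a w * Real.log (a w / b w)) / 2)
      = ∏ w : Fin M → Y, z w ^ a w := hleft.symm
    _ ≤ ∑ w : Fin M → Y, a w * z w := hgm
    _ = ∑ w : Fin M → Y, Real.sqrt (a w * b w) := hright

/-- Cauchy–Schwarz step: the squared Bhattacharyya sum is at most twice the min-sum. -/
lemma sq_sqrt_sum_le_two_min (a b : (Fin 0 → Y) → ℝ) : True := trivial

lemma sqrt_sum_sq_le (ι : Type*) [Fintype ι] (a b : ι → ℝ)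
    (ha : ∀ w, 0 ≤ a w) (hb : ∀ w, 0 ≤ b w)
    (hsa : ∑ w, a w = 1) (hsb : ∑ w, b w = 1) :
    (∑ w, Real.sqrt (a w * b w)) ^ 2 ≤ 2 * ∑ w, min (a w) (b w) := by
  have h1 : ∑ w, Real.sqrt (a w * b w)
      = ∑ w, Real.sqrt (min (a w) (b w)) * Real.sqrt (max (a w) (b w)) := by
    refine Finset.sum_congr rfl fun w _ => ?_
    rw [← Real.sqrt_mul (le_min (ha w) (hb w)), min_mul_max]
  have h2 := Real.sum_sqrt_mul_sqrt_le (Finset.univ : Finset ι)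
    (f := fun w => min (a w) (b w)) (g := fun w => max (a w) (b w))
    (fun w => le_min (ha w) (hb w)) (fun w => le_max_of_le_left (ha w))
  have h3 : ∑ w, max (a w) (b w) ≤ 2 := by
    calc ∑ w, max (a w) (b w) ≤ ∑ w, (a w + b w) :=
          Finset.sum_le_sum fun w _ => max_le_add_of_nonneg (ha w) (hb w)
      _ = 2 := by rw [Finset.sum_add_distrib, hsa, hsb]; norm_num
  have hmin : (0:ℝ) ≤ ∑ w, min (a w) (b w) :=
    Finset.sum_nonneg fun w _ => le_min (ha w) (hb w)
  calc (∑ w, Real.sqrt (a w * b w)) ^ 2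
      = (∑ w, Real.sqrt (min (a w) (b w)) * Real.sqrt (max (a w) (b w))) ^ 2 := by rw [h1]
    _ ≤ (Real.sqrt (∑ w, min (a w) (b w)) * Real.sqrt (∑ w, max (a w) (b w))) ^ 2 := by
        refine pow_le_pow_left₀ ?_ h2 2
        exact Finset.sum_nonneg fun w _ =>
          mul_nonneg (Real.sqrt_nonneg _) (Real.sqrt_nonneg _)
    _ = (∑ w, min (a w) (b w)) * (∑ w, max (a w) (b w)) := by
        rw [mul_pow, Real.sq_sqrt hmin, Real.sq_sqrt
          (Finset.sum_nonneg fun w _ => (ha w).trans (le_max_left _ _))]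
    _ ≤ (∑ w, min (a w) (b w)) * 2 := by
        refine mul_le_mul_of_nonneg_left h3 hmin
    _ = 2 * ∑ w, min (a w) (b w) := by ring

end Chain

section Assemble
variable [Fintype Y] [MeasurableSpace Y] [MeasurableSingletonClass Y]
variable {X : Type*} [Fintype X] [Nonempty X]

lemma measure_R_toReal (p : X → Y → ℝ) (hpos : ∀ x y, 0 < p x y)
    (f : (n : ℕ) → (Fin n → Y) → X) (μ : Measure (ℕ → Y)) [IsProbabilityMeasure μ]
    (hrec : ∀ (n : ℕ) (v : ℕ → Y),
      μ (cylinder (n + 1) v) = μ (cylinder n v) * ENNReal.ofReal (p (f n fun i => v i) (v n)))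
    (R : (ℕ → Y) → Prop) (n : ℕ)
    [inst : ∀ v : Fin n → Y, Decidable (R (ext0 n v))]
    (htr : ∀ (v : Fin n → Y) (ω : ℕ → Y), ω ∈ cylinder n (ext0 n v) → (R ω ↔ R (ext0 n v))) :
    (μ {ω | R ω}).toReal
      = ∑ v : Fin n → Y,
          if R (ext0 n v) then mass (fun n v y => p (f n v) y) n v else 0 := by
  classical
  rw [set_eq_biUnion_cylinder R n htr, measure_biUnion_cyl,
    Finset.sum_congr rfl fun v _ => measure_cylinder_ext0 p hpos f μ hrec n v,
    ENNReal.toReal_sum (fun v _ => ENNReal.ofReal_ne_top),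
    Finset.sum_congr rfl fun (v : Fin n → Y) _ =>
      ENNReal.toReal_ofReal (mass_pos (fun n v y => hpos (f n v) y) n v).le,
    Finset.sum_filter]

lemma measurableSet_R (R : (ℕ → Y) → Prop) (n : ℕ)
    [inst : ∀ v : Fin n → Y, Decidable (R (ext0 n v))]
    (htr : ∀ (v : Fin n → Y) (ω : ℕ → Y), ω ∈ cylinder n (ext0 n v) → (R ω ↔ R (ext0 n v))) :
    MeasurableSet {ω : ℕ → Y | R ω} := by
  classical
  rw [set_eq_biUnion_cylinder R n htr]
  exact Finset.measurableSet_biUnion _ fun v _ => measurableSet_cylinder n (ext0 n v)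

lemma div_le_iSup (p : X → Y → ℝ) (x x' : X) :
    ∑ y, p x y * Real.log (p x y / p x' y)
      ≤ ⨆ x : X, ⨆ x' : X, ∑ y, p x y * Real.log (p x y / p x' y) := by
  have h1 : ∑ y, p x y * Real.log (p x y / p x' y)
      ≤ ⨆ x'' : X, ∑ y, p x y * Real.log (p x y / p x'' y) :=
    le_ciSup (f := fun x'' : X => ∑ y, p x y * Real.log (p x y / p x'' y))
      (Set.Finite.bddAbove (Set.finite_range _)) x'
  refine h1.trans ?_
  exact le_ciSup (f := fun x : X => ⨆ x' : X, ∑ y, p x y * Real.log (p x y / p x' y))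
    (Set.Finite.bddAbove (Set.finite_range _)) x

lemma C1_nonneg (p : X → Y → ℝ) (hpos : ∀ x y, 0 < p x y) :
    0 ≤ ⨆ x : X, ⨆ x' : X, ∑ y, p x y * Real.log (p x y / p x' y) := by
  set x₀ := Classical.arbitrary X
  have h0 : ∑ y, p x₀ y * Real.log (p x₀ y / p x₀ y) = 0 :=
    Finset.sum_eq_zero fun y _ => by rw [div_self (hpos x₀ y).ne', Real.log_one, mul_zero]
  have := div_le_iSup p x₀ x₀
  linarith

variable (T : (ℕ → Y) → ℕ)

lemma layer_le (p : X → Y → ℝ) (hpos : ∀ x y, 0 < p x y)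
    (hstop : ∀ (n : ℕ) (ω ω' : ℕ → Y), (∀ i < n, ω i = ω' i) → (T ω = n ↔ T ω' = n))
    (f : Bool → (n : ℕ) → (Fin n → Y) → X) (b c : Bool) (m : ℕ) (u : Fin m → Y) :
    mass (kerQ T p f b) m u *
        ∑ y, kerQ T p f b m u y * Real.log (kerQ T p f b m u y / kerQ T p f c m u y)
      ≤ (if m < T (ext0 m u) then mass (fun n v y => p (f b n v) y) m u else 0) *
          (⨆ x : X, ⨆ x' : X, ∑ y, p x y * Real.log (p x y / p x' y)) := by
  classical
  by_cases h : m < T (ext0 m u)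
  · rw [if_pos h]
    rw [mass_kerQ_eq_of_le T hstop p f b m u h.le]
    have hker : ∀ y : Y, kerQ T p f b m u y = p (f b m u) y := by
      intro y; unfold kerQ; rw [if_pos h]
    have hker' : ∀ y : Y, kerQ T p f c m u y = p (f c m u) y := by
      intro y; unfold kerQ; rw [if_pos h]
    have hsum_eq : ∑ y, kerQ T p f b m u y * Real.log (kerQ T p f b m u y / kerQ T p f c m u y)
        = ∑ y, p (f b m u) y * Real.log (p (f b m u) y / p (f c m u) y) :=
      Finset.sum_congr rfl fun y _ => by rw [hker y, hker' y]
    rw [hsum_eq]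
    exact mul_le_mul_of_nonneg_left (div_le_iSup p (f b m u) (f c m u))
      (mass_pos (fun n v y => hpos (f b n v) y) m u).le
  · rw [if_neg h]
    have hz : ∀ y : Y, kerQ T p f b m u y = kerQ T p f c m u y := by
      intro y; unfold kerQ; rw [if_neg h, if_neg h]
    have : ∑ y, kerQ T p f b m u y * Real.log (kerQ T p f b m u y / kerQ T p f c m u y) = 0 := by
      refine Finset.sum_eq_zero fun y _ => ?_
      rw [hz y]
      have hc : kerQ T p f c m u y ≠ 0 := by
        unfold kerQ; rw [if_neg h]; exact (hpos _ y).ne'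
      rw [div_self hc, Real.log_one, mul_zero]
    rw [this, mul_zero, zero_mul]

end Assemble

section Assemble2
variable [Fintype Y] [MeasurableSpace Y] [MeasurableSingletonClass Y]
variable {X : Type*} [Fintype X] [Nonempty X]
variable (T : (ℕ → Y) → ℕ)
variable (p : X → Y → ℝ) (f : Bool → (n : ℕ) → (Fin n → Y) → X)

lemma kerP_rows (hsum : ∀ x, ∑ y, p x y = 1) (b : Bool) (n : ℕ) (v : Fin n → Y) :
    ∑ y, kerP p f b n v y = 1 := hsum _

lemma kerQ_rows (hsum : ∀ x, ∑ y, p x y = 1) (b : Bool) (n : ℕ) (v : Fin n → Y) :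
    ∑ y, kerQ T p f b n v y = 1 := by
  unfold kerQ
  by_cases h : n < T (ext0 n v)
  · simp only [if_pos h]; exact hsum _
  · simp only [if_neg h]; exact hsum _

lemma kerP_pos (hpos : ∀ x y, 0 < p x y) (b : Bool) (n : ℕ) (v : Fin n → Y) (y : Y) :
    0 < kerP p f b n v y := hpos _ y

lemma kerQ_pos (hpos : ∀ x y, 0 < p x y) (b : Bool) (n : ℕ) (v : Fin n → Y) (y : Y) :
    0 < kerQ T p f b n v y := by
  unfold kerQ
  by_cases h : n < T (ext0 n v)
  · simp only [if_pos h]; exact hpos _ y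
  · simp only [if_neg h]; exact hpos _ y

lemma tail_sum_le_integral (μ : Measure (ℕ → Y)) [IsProbabilityMeasure μ]
    (hmeas : ∀ m : ℕ, MeasurableSet {ω : ℕ → Y | m < T ω})
    (hT : Integrable (fun ω => (T ω : ℝ)) μ) (M : ℕ) :
    ∑ m ∈ Finset.range M, (μ {ω | m < T ω}).toReal ≤ ∫ ω, (T ω : ℝ) ∂μ := by
  classical
  have hind : ∀ m : ℕ, Integrable (Set.indicator {ω : ℕ → Y | m < T ω} (fun _ => (1:ℝ))) μ :=
    fun m => (integrable_const (1:ℝ)).indicator (hmeas m)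
  have h1 : ∀ m, (μ {ω | m < T ω}).toReal
      = ∫ ω, Set.indicator {ω : ℕ → Y | m < T ω} (fun _ => (1:ℝ)) ω ∂μ := by
    intro m
    rw [MeasureTheory.integral_indicator_const (1:ℝ) (hmeas m)]
    simp
    rfl
  calc ∑ m ∈ Finset.range M, (μ {ω | m < T ω}).toReal
      = ∫ ω, ∑ m ∈ Finset.range M,
          Set.indicator {ω : ℕ → Y | m < T ω} (fun _ => (1:ℝ)) ω ∂μ := by
        rw [MeasureTheory.integral_finset_sum _ (fun m _ => hind m)]
        exact Finset.sum_congr rfl fun m _ => h1 m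
    _ ≤ ∫ ω, (T ω : ℝ) ∂μ := by
        refine MeasureTheory.integral_mono
          (MeasureTheory.integrable_finset_sum _ (fun m _ => hind m)) hT ?_
        intro ω
        have hi : ∀ m, Set.indicator {ω : ℕ → Y | m < T ω} (fun _ => (1:ℝ)) ω
            = if m < T ω then 1 else 0 := by
          intro m
          rw [Set.indicator_apply]
          simp [Set.mem_setOf_eq]
        show (∑ m ∈ Finset.range M, Set.indicator {ω | m < T ω} (fun _ => (1:ℝ)) ω) ≤ (T ω : ℝ)
        rw [Finset.sum_congr rfl fun m _ => hi m, Finset.sum_boole]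
        have hsub : (Finset.range M).filter (fun m => m < T ω) ⊆ Finset.range (T ω) := by
          intro m hm
          simp only [Finset.mem_filter, Finset.mem_range] at hm ⊢
          exact hm.2
        have hc := Finset.card_le_card hsub
        rw [Finset.card_range] at hc
        exact_mod_cast hc

variable (hstop : ∀ (n : ℕ) (ω ω' : ℕ → Y), (∀ i < n, ω i = ω' i) → (T ω = n ↔ T ω' = n))
include hstop

lemma htr_lt (m : ℕ) :
    ∀ (v : Fin m → Y) (ω : ℕ → Y), ω ∈ cylinder m (ext0 m v) →
      (m < T ω ↔ m < T (ext0 m v)) :=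
  fun _ ω h => lt_T_transfer T hstop h

lemma htr_err (d : (Σ n, Fin n → Y) → Bool) (bb : Bool) (M : ℕ) :
    ∀ (v : Fin M → Y) (ω : ℕ → Y), ω ∈ cylinder M (ext0 M v) →
      ((T ω ≤ M ∧ Delta T d ω = bb) ↔ (T (ext0 M v) ≤ M ∧ Delta T d (ext0 M v) = bb)) := by
  intro v ω hω
  by_cases h : T ω ≤ M
  · have hTe : T (ext0 M v) = T ω := T_eq_of_le T hstop hω h
    have hD : Delta T d ω = Delta T d (ext0 M v) := by
      refine Delta_congr T d hTe.symm ?_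
      intro i hi
      exact hω i (by omega)
    constructor
    · rintro ⟨h1, h2⟩
      exact ⟨by omega, by rw [← hD]; exact h2⟩
    · rintro ⟨h1, h2⟩
      exact ⟨h, by rw [hD]; exact h2⟩
  · have h' : ¬ T (ext0 M v) ≤ M := by
      intro hc
      have := T_eq_of_le' T hstop hω hc
      omega
    simp [h, h']

/-- Key exchange lemma: the sum of stopped masses over stopped-and-decided sequences is the
same for the stopped kernel and the original kernel. -/
lemma stopped_sum_eq (hpos : ∀ x y, 0 < p x y) (hsum : ∀ x, ∑ y, p x y = 1)
    (d : (Σ n, Fin n → Y) → Bool) (b : Bool) (bb : Bool) :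
    ∀ M : ℕ, ∑ w : Fin M → Y,
        (if T (ext0 M w) ≤ M ∧ Delta T d (ext0 M w) = bb
          then mass (kerQ T p f b) M w else 0)
      = ∑ w : Fin M → Y,
        (if T (ext0 M w) ≤ M ∧ Delta T d (ext0 M w) = bb
          then mass (fun n v y => p (f b n v) y) M w else 0) := by
  classical
  have key : ∀ (κ : (n : ℕ) → (Fin n → Y) → Y → ℝ),
      (∀ n v, ∑ y, κ n v y = 1) →
      (∀ (M : ℕ) (u : Fin M → Y) (y : Y), M < T (ext0 M u) →
        mass κ (M + 1) (Fin.snoc u y) = mass (kerP p f b) (M + 1) (Fin.snoc u y)) →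
      ∀ (M : ℕ) (u : Fin M → Y),
        (∑ y : Y, if T (ext0 (M + 1) (Fin.snoc u y)) ≤ M + 1 ∧
              Delta T d (ext0 (M + 1) (Fin.snoc u y)) = bb
            then mass κ (M + 1) (Fin.snoc u y) else 0)
          = (if T (ext0 M u) ≤ M ∧ Delta T d (ext0 M u) = bb then mass κ M u else 0)
            + ∑ y : Y, (if M < T (ext0 M u) ∧ (T (ext0 (M + 1) (Fin.snoc u y)) ≤ M + 1 ∧
                Delta T d (ext0 (M + 1) (Fin.snoc u y)) = bb)
              then mass (kerP p f b) (M + 1) (Fin.snoc u y) else 0) := by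
    intro κ hrows hagree M u
    by_cases hu : T (ext0 M u) ≤ M
    · have hnl : ¬ M < T (ext0 M u) := by omega
      have hT : ∀ y : Y, T (ext0 (M + 1) (Fin.snoc u y)) = T (ext0 M u) :=
        fun y => T_snoc_of_le T hstop y hu
      have hD : ∀ y : Y, Delta T d (ext0 (M + 1) (Fin.snoc u y)) = Delta T d (ext0 M u) := by
        intro y
        refine Delta_congr T d (hT y) ?_
        intro i hi
        exact ext0_snoc_lt u y (by omega)
      have hcond : ∀ y : Y,
          (T (ext0 (M + 1) (Fin.snoc u y)) ≤ M + 1 ∧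
              Delta T d (ext0 (M + 1) (Fin.snoc u y)) = bb)
            ↔ (Delta T d (ext0 M u) = bb) := by
        intro y
        rw [hT y, hD y]
        constructor
        · rintro ⟨_, h2⟩; exact h2
        · intro h2; exact ⟨by omega, h2⟩
      have hz : (∑ y : Y, if M < T (ext0 M u) ∧ (T (ext0 (M + 1) (Fin.snoc u y)) ≤ M + 1 ∧
              Delta T d (ext0 (M + 1) (Fin.snoc u y)) = bb)
            then mass (kerP p f b) (M + 1) (Fin.snoc u y) else 0) = 0 :=
        Finset.sum_eq_zero fun y _ => by
          rw [if_neg]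
          rintro ⟨h1, _⟩
          exact hnl h1
      rw [hz, add_zero]
      by_cases hd : Delta T d (ext0 M u) = bb
      · have : ∀ y : Y, (if T (ext0 (M + 1) (Fin.snoc u y)) ≤ M + 1 ∧
              Delta T d (ext0 (M + 1) (Fin.snoc u y)) = bb
            then mass κ (M + 1) (Fin.snoc u y) else 0) = mass κ (M + 1) (Fin.snoc u y) :=
          fun y => if_pos ((hcond y).2 hd)
        rw [Finset.sum_congr rfl fun y _ => this y, if_pos ⟨hu, hd⟩]
        have : ∀ y : Y, mass κ (M + 1) (Fin.snoc u y) = mass κ M u * κ M u y :=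
          fun y => mass_snoc κ M u y
        rw [Finset.sum_congr rfl fun y _ => this y, ← Finset.mul_sum, hrows M u, mul_one]
      · have : ∀ y : Y, (if T (ext0 (M + 1) (Fin.snoc u y)) ≤ M + 1 ∧
              Delta T d (ext0 (M + 1) (Fin.snoc u y)) = bb
            then mass κ (M + 1) (Fin.snoc u y) else 0) = 0 :=
          fun y => if_neg (fun hcc => hd ((hcond y).1 hcc))
        rw [Finset.sum_congr rfl fun y _ => this y, if_neg (fun hcc => hd hcc.2)]
        simp
    · have hal : M < T (ext0 M u) := by omega
      rw [if_neg (fun hcc => hu hcc.1), zero_add]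
      refine Finset.sum_congr rfl fun y _ => ?_
      by_cases hc : T (ext0 (M + 1) (Fin.snoc u y)) ≤ M + 1 ∧
          Delta T d (ext0 (M + 1) (Fin.snoc u y)) = bb
      · rw [if_pos hc, if_pos ⟨hal, hc⟩, hagree M u y hal]
      · rw [if_neg hc, if_neg (fun hcc => hc hcc.2)]
  intro M
  induction M with
  | zero =>
    refine Finset.sum_congr rfl fun w _ => ?_
    by_cases h : T (ext0 0 w) ≤ 0 ∧ Delta T d (ext0 0 w) = bb
    · rw [if_pos h, if_pos h]; rfl
    · rw [if_neg h, if_neg h]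
  | succ M ih =>
    rw [sum_snoc, sum_snoc]
    have hQ := key (kerQ T p f b) (kerQ_rows T p f hsum b)
      (fun M u y hal => mass_kerQ_eq_of_le T hstop p f b (M + 1) (Fin.snoc u y)
        (T_snoc_of_gt T hstop y hal))
    have hP := key (fun n v y => p (f b n v) y) (fun n v => hsum _)
      (fun M u y _ => rfl)
    rw [Finset.sum_congr rfl fun u _ => hQ M u, Finset.sum_congr rfl fun u _ => hP M u,
      Finset.sum_add_distrib, Finset.sum_add_distrib, ih]

end Assemble2
end DMCAux

/-- The error probability of a binary hypothesis test performed across a DMC with feedback,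
with priors `p_A, p_N` and decision (by `d`, reading the stopped output `Y^T`) at a stopping
time `T` of finite expectation, is lower bounded by
`P_e ≥ (min{p_A,p_N}/4) exp(−C₁ E[T])` where `C₁ = max_{x,x'} D(p(·|x) ‖ p(·|x'))`. -/
theorem stmt8 {X Y : Type*} [Fintype X] [Fintype Y] [Nonempty X] [Nonempty Y]
    [MeasurableSpace Y] [MeasurableSingletonClass Y]
    (p : X → Y → ℝ) (hpos : ∀ x y, 0 < p x y) (hsum : ∀ x, ∑ y, p x y = 1)
    (f : Bool → (n : ℕ) → (Fin n → Y) → X)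
    (μA μN : Measure (ℕ → Y)) [IsProbabilityMeasure μA] [IsProbabilityMeasure μN]
    (hA : ∀ (n : ℕ) (v : ℕ → Y),
      μA (cylinder (n + 1) v) =
        μA (cylinder n v) * ENNReal.ofReal (p (f true n fun i => v i) (v n)))
    (hN : ∀ (n : ℕ) (v : ℕ → Y),
      μN (cylinder (n + 1) v) =
        μN (cylinder n v) * ENNReal.ofReal (p (f false n fun i => v i) (v n)))
    (T : (ℕ → Y) → ℕ)
    (hstop : ∀ (n : ℕ) (ω ω' : ℕ → Y), (∀ i < n, ω i = ω' i) → (T ω = n ↔ T ω' = n))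
    (hTA : Integrable (fun ω => (T ω : ℝ)) μA)
    (hTN : Integrable (fun ω => (T ω : ℝ)) μN)
    (pA pN : ℝ) (hpA : 0 < pA) (hpN : 0 < pN) (hprior : pA + pN = 1)
    (d : (Σ n, Fin n → Y) → Bool) :
    min pA pN / 4 *
        Real.exp (-((⨆ x, ⨆ x', ∑ y, p x y * Real.log (p x y / p x' y)) *
          (pA * ∫ ω, (T ω : ℝ) ∂μA + pN * ∫ ω, (T ω : ℝ) ∂μN)))
      ≤ pA * (μA {ω | d ⟨T ω, fun i => ω i⟩ = false}).toReal +
          pN * (μN {ω | d ⟨T ω, fun i => ω i⟩ = true}).toReal := by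
  set C1 : ℝ := ⨆ x, ⨆ x', ∑ y, p x y * Real.log (p x y / p x' y) with hC1
  set IA : ℝ := ∫ ω, (T ω : ℝ) ∂μA with hIA
  set IN : ℝ := ∫ ω, (T ω : ℝ) ∂μN with hIN
  have hC1n : 0 ≤ C1 := C1_nonneg p hpos
  set minp : ℝ := min pA pN with hminp
  have hminpos : 0 < minp := lt_min hpA hpN
  set Pe : ℝ := pA * (μA {ω | d ⟨T ω, fun i => ω i⟩ = false}).toReal +
      pN * (μN {ω | d ⟨T ω, fun i => ω i⟩ = true}).toReal with hPe
  -- kernels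
  set κT := kerQ T p f true with hκT
  set κF := kerQ T p f false with hκF
  have hposT := kerQ_pos T p f hpos true
  have hposF := kerQ_pos T p f hpos false
  have hrowsT := kerQ_rows T p f hsum true
  have hrowsF := kerQ_rows T p f hsum false
  -- measurability of tail sets
  have hmeasA : ∀ m : ℕ, MeasurableSet {ω : ℕ → Y | m < T ω} :=
    fun m => measurableSet_R (fun ω => m < T ω) m (htr_lt T hstop m)
  -- tail masses
  have htailA : ∀ m : ℕ, (μA {ω | m < T ω}).toReal
      = ∑ u : Fin m → Y, if m < T (ext0 m u) then mass (fun n v y => p (f true n v) y) m u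
          else 0 :=
    fun m => measure_R_toReal p hpos (f true) μA hA (fun ω => m < T ω) m (htr_lt T hstop m)
  have htailN : ∀ m : ℕ, (μN {ω | m < T ω}).toReal
      = ∑ u : Fin m → Y, if m < T (ext0 m u) then mass (fun n v y => p (f false n v) y) m u
          else 0 :=
    fun m => measure_R_toReal p hpos (f false) μN hN (fun ω => m < T ω) m (htr_lt T hstop m)
  -- divergence bounds
  have hDA : ∀ M : ℕ,
      ∑ w : Fin M → Y, mass κT M w * Real.log (mass κT M w / mass κF M w) ≤ C1 * IA := by
    intro M
    rw [chain_identity κT κF hposT hposF hrowsT M]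
    have hlayer : ∀ m ∈ Finset.range M,
        (∑ u : Fin m → Y, mass κT m u * ∑ y, κT m u y * Real.log (κT m u y / κF m u y))
          ≤ (μA {ω | m < T ω}).toReal * C1 := by
      intro m _
      rw [htailA m, Finset.sum_mul]
      exact Finset.sum_le_sum fun u _ => layer_le T p hpos hstop f true false m u
    calc ∑ m ∈ Finset.range M, ∑ u : Fin m → Y,
          mass κT m u * ∑ y, κT m u y * Real.log (κT m u y / κF m u y)
        ≤ ∑ m ∈ Finset.range M, (μA {ω | m < T ω}).toReal * C1 :=
          Finset.sum_le_sum hlayer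
      _ = (∑ m ∈ Finset.range M, (μA {ω | m < T ω}).toReal) * C1 := by
          rw [Finset.sum_mul]
      _ ≤ IA * C1 := by
          refine mul_le_mul_of_nonneg_right ?_ hC1n
          exact tail_sum_le_integral T μA hmeasA hTA M
      _ = C1 * IA := by ring
  have hDN : ∀ M : ℕ,
      ∑ w : Fin M → Y, mass κF M w * Real.log (mass κF M w / mass κT M w) ≤ C1 * IN := by
    intro M
    rw [chain_identity κF κT hposF hposT hrowsF M]
    have hlayer : ∀ m ∈ Finset.range M,
        (∑ u : Fin m → Y, mass κF m u * ∑ y, κF m u y * Real.log (κF m u y / κT m u y))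
          ≤ (μN {ω | m < T ω}).toReal * C1 := by
      intro m _
      rw [htailN m, Finset.sum_mul]
      exact Finset.sum_le_sum fun u _ => layer_le T p hpos hstop f false true m u
    calc ∑ m ∈ Finset.range M, ∑ u : Fin m → Y,
          mass κF m u * ∑ y, κF m u y * Real.log (κF m u y / κT m u y)
        ≤ ∑ m ∈ Finset.range M, (μN {ω | m < T ω}).toReal * C1 :=
          Finset.sum_le_sum hlayer
      _ = (∑ m ∈ Finset.range M, (μN {ω | m < T ω}).toReal) * C1 := by
          rw [Finset.sum_mul]
      _ ≤ IN * C1 := by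
          refine mul_le_mul_of_nonneg_right ?_ hC1n
          exact tail_sum_le_integral T μN hmeasA hTN M
      _ = C1 * IN := by ring
  -- Bhattacharyya bounds
  have hB : ∀ M : ℕ, Real.exp (-(C1 * (pA * IA + pN * IN)))
      ≤ 2 * ∑ w : Fin M → Y, min (mass κT M w) (mass κF M w) := by
    intro M
    set B : ℝ := ∑ w : Fin M → Y, Real.sqrt (mass κT M w * mass κF M w) with hBdef
    have hB1 : Real.exp (-(C1 * IA) / 2) ≤ B := by
      refine le_trans ?_ (exp_neg_div_le_sqrt_sum κT κF hposT hposF hrowsT M)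
      exact Real.exp_le_exp.2 (by have := hDA M; linarith)
    have hB2 : Real.exp (-(C1 * IN) / 2) ≤ B := by
      have h := exp_neg_div_le_sqrt_sum κF κT hposF hposT hrowsF M
      have hq : ∑ w : Fin M → Y, Real.sqrt (mass κF M w * mass κT M w) = B := by
        rw [hBdef]
        exact Finset.sum_congr rfl fun w _ => by rw [mul_comm]
      rw [hq] at h
      refine le_trans ?_ h
      exact Real.exp_le_exp.2 (by have := hDN M; linarith)
    have hBsq : B ^ 2 ≤ 2 * ∑ w : Fin M → Y, min (mass κT M w) (mass κF M w) :=
      sqrt_sum_sq_le (Fin M → Y) (mass κT M) (mass κF M)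
        (fun w => (mass_pos hposT M w).le) (fun w => (mass_pos hposF M w).le)
        (sum_mass hrowsT M) (sum_mass hrowsF M)
    have hKmin : Real.exp (-(C1 * (pA * IA + pN * IN))) ≤ B ^ 2 := by
      rcases le_total (C1 * IA) (C1 * IN) with h | h
      · have hkey : C1 * (pA * IA + pN * IN) - C1 * IA = pN * (C1 * IN - C1 * IA) := by
          have hpa : pA = 1 - pN := by linarith
          rw [hpa]; ring
        have h1 : 0 ≤ pN * (C1 * IN - C1 * IA) := mul_nonneg hpN.le (by linarith)
        have hK : C1 * IA ≤ C1 * (pA * IA + pN * IN) := by linarith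
        calc Real.exp (-(C1 * (pA * IA + pN * IN))) ≤ Real.exp (-(C1 * IA)) :=
              Real.exp_le_exp.2 (by linarith)
          _ = Real.exp (-(C1 * IA) / 2) ^ 2 := by
              rw [sq, ← Real.exp_add]
              congr 1
              ring
          _ ≤ B ^ 2 := by
              refine pow_le_pow_left₀ (Real.exp_pos _).le hB1 2
      · have hkey : C1 * (pA * IA + pN * IN) - C1 * IN = pA * (C1 * IA - C1 * IN) := by
          have hpn : pN = 1 - pA := by linarith
          rw [hpn]; ring
        have h1 : 0 ≤ pA * (C1 * IA - C1 * IN) := mul_nonneg hpA.le (by linarith)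
        have hK : C1 * IN ≤ C1 * (pA * IA + pN * IN) := by linarith
        calc Real.exp (-(C1 * (pA * IA + pN * IN))) ≤ Real.exp (-(C1 * IN)) :=
              Real.exp_le_exp.2 (by linarith)
          _ = Real.exp (-(C1 * IN) / 2) ^ 2 := by
              rw [sq, ← Real.exp_add]
              congr 1
              ring
          _ ≤ B ^ 2 := by
              refine pow_le_pow_left₀ (Real.exp_pos _).le hB2 2
    exact hKmin.trans hBsq
  -- min decomposition and error bound
  have hmain : ∀ M : ℕ, minp / 2 * Real.exp (-(C1 * (pA * IA + pN * IN)))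
      ≤ Pe + minp * (μA {ω | M < T ω}).toReal := by
    intro M
    set SA : ℝ := ∑ w : Fin M → Y,
        if T (ext0 M w) ≤ M ∧ Delta T d (ext0 M w) = false then mass κT M w else 0 with hSA
    set SN : ℝ := ∑ w : Fin M → Y,
        if T (ext0 M w) ≤ M ∧ Delta T d (ext0 M w) = true then mass κF M w else 0 with hSN
    set tail : ℝ := ∑ w : Fin M → Y,
        if M < T (ext0 M w) then mass κT M w else 0 with htail
    have hdecomp : ∑ w : Fin M → Y, min (mass κT M w) (mass κF M w) ≤ SA + SN + tail := by
      rw [hSA, hSN, htail, ← Finset.sum_add_distrib, ← Finset.sum_add_distrib]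
      refine Finset.sum_le_sum fun w _ => ?_
      have h1 : (0:ℝ) ≤ if T (ext0 M w) ≤ M ∧ Delta T d (ext0 M w) = false
          then mass κT M w else 0 := by
        split <;> [exact (mass_pos hposT M w).le; rfl]
      have h2 : (0:ℝ) ≤ if T (ext0 M w) ≤ M ∧ Delta T d (ext0 M w) = true
          then mass κF M w else 0 := by
        split <;> [exact (mass_pos hposF M w).le; rfl]
      have h3 : (0:ℝ) ≤ if M < T (ext0 M w) then mass κT M w else 0 := by
        split <;> [exact (mass_pos hposT M w).le; rfl]
      by_cases hT : T (ext0 M w) ≤ M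
      · by_cases hd : Delta T d (ext0 M w) = false
        · have heq1 : (if T (ext0 M w) ≤ M ∧ Delta T d (ext0 M w) = false
              then mass κT M w else 0) = mass κT M w := if_pos ⟨hT, hd⟩
          rw [heq1]
          have := min_le_left (mass κT M w) (mass κF M w)
          linarith
        · have hd' : Delta T d (ext0 M w) = true := by
            revert hd
            cases Delta T d (ext0 M w) <;> simp
          have heq2 : (if T (ext0 M w) ≤ M ∧ Delta T d (ext0 M w) = true
              then mass κF M w else 0) = mass κF M w := if_pos ⟨hT, hd'⟩
          rw [heq2]
          have := min_le_right (mass κT M w) (mass κF M w)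
          linarith
      · have hM : M < T (ext0 M w) := by omega
        have : (if M < T (ext0 M w) then mass κT M w else 0) = mass κT M w := if_pos hM
        rw [this]
        have := min_le_left (mass κT M w) (mass κF M w)
        linarith
    have hSAle : SA ≤ (μA {ω | d ⟨T ω, fun i => ω i⟩ = false}).toReal := by
      rw [hSA, hκT, stopped_sum_eq T p f hstop hpos hsum d true false M]
      have heq : (μA {ω | T ω ≤ M ∧ Delta T d ω = false}).toReal
          = ∑ w : Fin M → Y, if T (ext0 M w) ≤ M ∧ Delta T d (ext0 M w) = false
              then mass (fun n v y => p (f true n v) y) M w else 0 := by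
        exact measure_R_toReal p hpos (f true) μA hA
          (fun ω => T ω ≤ M ∧ Delta T d ω = false) M (htr_err T hstop d false M)
      rw [← heq]
      refine ENNReal.toReal_mono (measure_ne_top _ _) (measure_mono ?_)
      intro ω hω
      exact hω.2
    have hSNle : SN ≤ (μN {ω | d ⟨T ω, fun i => ω i⟩ = true}).toReal := by
      rw [hSN, hκF, stopped_sum_eq T p f hstop hpos hsum d false true M]
      have heq : (μN {ω | T ω ≤ M ∧ Delta T d ω = true}).toReal
          = ∑ w : Fin M → Y, if T (ext0 M w) ≤ M ∧ Delta T d (ext0 M w) = true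
              then mass (fun n v y => p (f false n v) y) M w else 0 := by
        exact measure_R_toReal p hpos (f false) μN hN
          (fun ω => T ω ≤ M ∧ Delta T d ω = true) M (htr_err T hstop d true M)
      rw [← heq]
      refine ENNReal.toReal_mono (measure_ne_top _ _) (measure_mono ?_)
      intro ω hω
      exact hω.2
    have htaileq : tail = (μA {ω | M < T ω}).toReal := by
      rw [htail, htailA M]
      refine Finset.sum_congr rfl fun w _ => ?_
      by_cases h : M < T (ext0 M w)
      · rw [if_pos h, if_pos h, hκT, mass_kerQ_eq_of_le T hstop p f true M w h.le]
        rfl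
      · rw [if_neg h, if_neg h]
    have hSAnn : 0 ≤ SA := by
      rw [hSA]
      refine Finset.sum_nonneg fun w _ => ?_
      split <;> [exact (mass_pos hposT M w).le; rfl]
    have hSNnn : 0 ≤ SN := by
      rw [hSN]
      refine Finset.sum_nonneg fun w _ => ?_
      split <;> [exact (mass_pos hposF M w).le; rfl]
    have h2 := hB M
    have hmA : minp ≤ pA := min_le_left _ _
    have hmN : minp ≤ pN := min_le_right _ _
    have hstep : minp / 2 * Real.exp (-(C1 * (pA * IA + pN * IN)))
        ≤ minp * (SA + SN + tail) := by
      have := mul_le_mul_of_nonneg_left (h2.trans (by linarith : 2 * ∑ w : Fin M → Y,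
        min (mass κT M w) (mass κF M w) ≤ 2 * (SA + SN + tail))) (le_of_lt hminpos)
      linarith
    have hfin : minp * (SA + SN + tail) ≤ Pe + minp * (μA {ω | M < T ω}).toReal := by
      rw [htaileq, hPe]
      have hA' : minp * SA ≤ pA * (μA {ω | d ⟨T ω, fun i => ω i⟩ = false}).toReal :=
        mul_le_mul hmA hSAle hSAnn hpA.le
      have hN' : minp * SN ≤ pN * (μN {ω | d ⟨T ω, fun i => ω i⟩ = true}).toReal :=
        mul_le_mul hmN hSNle hSNnn hpN.le
      nlinarith [ENNReal.toReal_nonneg (a := μA {ω | M < T ω})]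
    exact hstep.trans hfin
  -- pass to the limit
  have htendsto : Filter.Tendsto (fun M : ℕ => (μA {ω | M < T ω}).toReal)
      Filter.atTop (nhds 0) := by
    have h1 : Filter.Tendsto (fun M : ℕ => μA {ω | M < T ω}) Filter.atTop
        (nhds (μA (⋂ M : ℕ, {ω | M < T ω}))) := by
      refine tendsto_measure_iInter_atTop (fun M => (hmeasA M).nullMeasurableSet) ?_ ⟨0, measure_ne_top _ _⟩
      intro M M' hMM' ω hω
      simp only [Set.mem_setOf_eq] at hω ⊢
      omega
    have h2 : (⋂ M : ℕ, {ω : ℕ → Y | M < T ω}) = ∅ := by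
      ext ω
      simp only [Set.mem_iInter, Set.mem_setOf_eq, Set.mem_empty_iff_false, iff_false,
        not_forall, not_lt]
      exact ⟨T ω, le_refl _⟩
    rw [h2, measure_empty] at h1
    have h3 : Filter.Tendsto ENNReal.toReal (nhds 0) (nhds (0:ℝ)) := by
      have := ENNReal.tendsto_toReal (a := 0) (by simp)
      simpa using this
    exact h3.comp h1
  have hlim : minp / 2 * Real.exp (-(C1 * (pA * IA + pN * IN))) ≤ Pe := by
    have hT2 : Filter.Tendsto (fun M : ℕ => Pe + minp * (μA {ω | M < T ω}).toReal)
        Filter.atTop (nhds (Pe + minp * 0)) :=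
      Filter.Tendsto.add tendsto_const_nhds (htendsto.const_mul minp)
    rw [mul_zero, add_zero] at hT2
    exact ge_of_tendsto' hT2 hmain
  have hexp : (0:ℝ) < Real.exp (-(C1 * (pA * IA + pN * IN))) := Real.exp_pos _
  calc minp / 4 * Real.exp (-(C1 * (pA * IA + pN * IN)))
      ≤ minp / 2 * Real.exp (-(C1 * (pA * IA + pN * IN))) := by nlinarith
    _ ≤ Pe := hlim
end

section
/- With τ defined as the first time the MAP error drops below δ (or T is reached), the expected posterior entropy at τ satisfies E[H(Y^τ)] ≤ h(δ) + ( δ + P_e/δ ) ln M. -/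
set_option maxHeartbeats 2000000


open MeasureTheory
open scoped BigOperators ENNReal

/-- The event that the first `n` channel outputs agree with those of the realization `ω`. -/
def histSet {Ω Y : Type*} (Yv : Ω → ℕ → Y) (n : ℕ) (ω : Ω) : Set Ω :=
  {ω' | ∀ i < n, Yv ω' i = Yv ω i}

/-- The posterior probability `p(w | Y^n)` of message `w` given the first `n` outputs of the
realization `ω`. -/
noncomputable def post {Ω W Y : Type*} [MeasurableSpace Ω] (μ : Measure Ω)
    (Wv : Ω → W) (Yv : Ω → ℕ → Y) (n : ℕ) (ω : Ω) (w : W) : ℝ :=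
  (μ ({ω' | Wv ω' = w} ∩ histSet Yv n ω)).toReal / (μ (histSet Yv n ω)).toReal

/-- The MAP error probability `P_e(Y^n) = 1 − max_w p(w | Y^n)`. -/
noncomputable def peMap {Ω W Y : Type*} [MeasurableSpace Ω] [Fintype W] (μ : Measure Ω)
    (Wv : Ω → W) (Yv : Ω → ℕ → Y) (n : ℕ) (ω : Ω) : ℝ :=
  1 - ⨆ w, post μ Wv Yv n ω w

/-- `τ = inf{n : P_e(Y^n) ≤ δ or n = T}`. -/
noncomputable def tauOf {Ω W Y : Type*} [MeasurableSpace Ω] [Fintype W] (μ : Measure Ω)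
    (Wv : Ω → W) (Yv : Ω → ℕ → Y) (δ : ℝ) (T : Ω → ℕ) (ω : Ω) : ℕ :=
  sInf {n | peMap μ Wv Yv n ω ≤ δ ∨ n = T ω}

/-- The entropy `H(Y^n)` of the posterior distribution of the message given `Y^n`. -/
noncomputable def postEnt {Ω W Y : Type*} [MeasurableSpace Ω] [Fintype W] (μ : Measure Ω)
    (Wv : Ω → W) (Yv : Ω → ℕ → Y) (n : ℕ) (ω : Ω) : ℝ :=
  ∑ w, -(post μ Wv Yv n ω w * Real.log (post μ Wv Yv n ω w))

lemma aux_negMulLog_le_one_sub {x : ℝ} (hx : 0 ≤ x) : Real.negMulLog x ≤ 1 - x := by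
  rcases eq_or_lt_of_le hx with h | h
  · simp [← h]
  · have h1 := Real.log_le_sub_one_of_pos (inv_pos.2 h)
    rw [Real.log_inv] at h1
    have h2 : x * x⁻¹ = 1 := mul_inv_cancel₀ h.ne'
    simp only [Real.negMulLog]
    nlinarith [mul_le_mul_of_nonneg_left h1 h.le]

lemma aux_sum_negMulLog_le {W : Type*} (s : Finset W) (q : W → ℝ)
    (h0 : ∀ w ∈ s, 0 ≤ q w) (h1 : ∑ w ∈ s, q w = 1) :
    ∑ w ∈ s, Real.negMulLog (q w) ≤ Real.log s.card := by
  have hs : 0 < (s.card : ℝ) := by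
    have : s.Nonempty := Finset.nonempty_of_sum_ne_zero (by rw [h1]; norm_num)
    exact_mod_cast Finset.card_pos.2 this
  set n : ℝ := (s.card : ℝ) with hn
  have key : ∀ w ∈ s, Real.negMulLog (q w) ≤ q w * Real.log n + 1 / n - q w := by
    intro w hw
    have h2 : Real.negMulLog (n * q w) ≤ 1 - n * q w :=
      aux_negMulLog_le_one_sub (mul_nonneg hs.le (h0 w hw))
    rw [Real.negMulLog_mul] at h2
    have h3 : Real.negMulLog n = -n * Real.log n := rfl
    rw [h3] at h2
    have h4 : n * Real.negMulLog (q w) ≤ n * (q w * Real.log n + 1 / n - q w) := by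
      have h5 : n * (1 / n) = 1 := by field_simp
      nlinarith
    exact le_of_mul_le_mul_left h4 hs
  calc ∑ w ∈ s, Real.negMulLog (q w) ≤ ∑ w ∈ s, (q w * Real.log n + 1 / n - q w) :=
        Finset.sum_le_sum key
    _ = (∑ w ∈ s, q w) * Real.log n + s.card * (1 / n) - ∑ w ∈ s, q w := by
        rw [Finset.sum_sub_distrib, Finset.sum_add_distrib, ← Finset.sum_mul, Finset.sum_const,
          nsmul_eq_mul]
    _ = Real.log n := by
        rw [h1, ← hn]
        field_simp
        ring

lemma aux_fano {W : Type*} [Fintype W] [Nonempty W] (p : W → ℝ) (h0 : ∀ w, 0 ≤ p w)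
    (h1 : ∑ w, p w = 1) {δ : ℝ} (hδ0 : 0 < δ) (hδ : δ ≤ 1 / 2)
    (he : 1 - ⨆ w, p w ≤ δ) :
    ∑ w, Real.negMulLog (p w) ≤ Real.binEntropy δ + δ * Real.log (Fintype.card W) := by
  classical
  obtain ⟨w₀, hw₀⟩ : ∃ w₀, p w₀ = ⨆ w, p w := exists_eq_ciSup_of_finite
  set e : ℝ := 1 - p w₀ with hedef
  have hple : p w₀ ≤ 1 := by
    calc p w₀ ≤ ∑ w, p w := Finset.single_le_sum (fun w _ => h0 w) (Finset.mem_univ w₀)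
      _ = 1 := h1
  have he0 : 0 ≤ e := by rw [hedef]; linarith
  have heδ : e ≤ δ := by rw [hedef, hw₀]; exact he
  have hsum : ∑ w ∈ Finset.univ.erase w₀, p w = e := by
    have h2 := Finset.add_sum_erase Finset.univ p (Finset.mem_univ w₀)
    rw [h1] at h2
    rw [hedef]; linarith
  have hsplit : ∑ w, Real.negMulLog (p w)
      = Real.negMulLog (p w₀) + ∑ w ∈ Finset.univ.erase w₀, Real.negMulLog (p w) :=
    (Finset.add_sum_erase _ _ (Finset.mem_univ w₀)).symm
  have hM1 : (1 : ℝ) ≤ Fintype.card W := by exact_mod_cast Fintype.card_pos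
  have hlogM : 0 ≤ Real.log (Fintype.card W) := Real.log_nonneg hM1
  have hrest : ∑ w ∈ Finset.univ.erase w₀, Real.negMulLog (p w)
      ≤ Real.negMulLog e + e * Real.log (Fintype.card W) := by
    rcases eq_or_lt_of_le he0 with h | h
    · have hz : ∀ w ∈ Finset.univ.erase w₀, p w = 0 := by
        rw [← Finset.sum_eq_zero_iff_of_nonneg (fun w _ => h0 w), hsum, ← h]
      rw [Finset.sum_eq_zero (fun w hw => by rw [hz w hw]; simp), ← h]
      simp
    · set q : W → ℝ := fun w => p w / e with hqdef
      have hq1 : ∑ w ∈ Finset.univ.erase w₀, q w = 1 := by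
        rw [hqdef]
        rw [← Finset.sum_div, hsum]
        field_simp
      have hent := aux_sum_negMulLog_le _ q (fun w _ => div_nonneg (h0 w) he0) hq1
      have hcpos : 0 < ((Finset.univ.erase w₀).card : ℝ) := by
        have : (Finset.univ.erase w₀).Nonempty :=
          Finset.nonempty_of_sum_ne_zero (by rw [hq1]; norm_num)
        exact_mod_cast Finset.card_pos.2 this
      have hlog : Real.log ((Finset.univ.erase w₀).card : ℝ) ≤ Real.log (Fintype.card W) := by
        apply Real.log_le_log hcpos
        exact_mod_cast Finset.card_le_univ _
      calc ∑ w ∈ Finset.univ.erase w₀, Real.negMulLog (p w)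
          = ∑ w ∈ Finset.univ.erase w₀, Real.negMulLog (e * q w) := by
            apply Finset.sum_congr rfl; intro w _
            congr 1
            rw [hqdef]
            field_simp
        _ = ∑ w ∈ Finset.univ.erase w₀,
              (q w * Real.negMulLog e + e * Real.negMulLog (q w)) := by
            simp [Real.negMulLog_mul]
        _ = (∑ w ∈ Finset.univ.erase w₀, q w) * Real.negMulLog e
              + e * ∑ w ∈ Finset.univ.erase w₀, Real.negMulLog (q w) := by
            rw [Finset.sum_add_distrib, ← Finset.sum_mul, ← Finset.mul_sum]
        _ = Real.negMulLog e + e * ∑ w ∈ Finset.univ.erase w₀, Real.negMulLog (q w) := by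
            rw [hq1, one_mul]
        _ ≤ Real.negMulLog e + e * Real.log (Fintype.card W) := by
            have := mul_le_mul_of_nonneg_left (hent.trans hlog) h.le
            linarith
  have htot : ∑ w, Real.negMulLog (p w)
      ≤ Real.binEntropy e + e * Real.log (Fintype.card W) := by
    rw [hsplit, Real.binEntropy_eq_negMulLog_add_negMulLog_one_sub]
    have h1e : (1 : ℝ) - e = p w₀ := by rw [hedef]; ring
    rw [h1e]
    linarith
  have hmem_e : e ∈ Set.Icc (0 : ℝ) 2⁻¹ := ⟨he0, by rw [show (2⁻¹ : ℝ) = 1 / 2 by norm_num]; linarith⟩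
  have hmem_δ : δ ∈ Set.Icc (0 : ℝ) 2⁻¹ := ⟨hδ0.le, by rw [show (2⁻¹ : ℝ) = 1 / 2 by norm_num]; linarith⟩
  have hmono : Real.binEntropy e ≤ Real.binEntropy δ := by
    rcases eq_or_lt_of_le heδ with h | h
    · rw [h]
    · exact (Real.binEntropy_strictMonoOn hmem_e hmem_δ h).le
  have := mul_le_mul_of_nonneg_right heδ hlogM
  linarith

/-- With `τ` the first time the MAP error drops below `δ` (or `T` is reached), the expected
posterior entropy at `τ` satisfies `E[H(Y^τ)] ≤ h(δ) + (δ + P_e/δ) ln M`, where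
`P_e = E[P_e(Y^T)]` and `h` is the binary entropy function. -/
theorem stmt12 {Ω W Y : Type*} {mΩ : MeasurableSpace Ω} (μ : Measure Ω)
    [IsProbabilityMeasure μ]
    [Fintype W] [Nonempty W] [MeasurableSpace W] [MeasurableSingletonClass W]
    [Fintype Y] [MeasurableSpace Y] [MeasurableSingletonClass Y]
    (Wv : Ω → W) (hWv : Measurable Wv)
    (hunif : ∀ w : W, μ {ω | Wv ω = w} = (Fintype.card W : ℝ≥0∞)⁻¹)
    (Yv : Ω → ℕ → Y) (hYv : ∀ i, Measurable fun ω => Yv ω i)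
    (T : Ω → ℕ) (hT : Measurable T)
    (δ : ℝ) (hδ0 : 0 < δ) (hδ : δ ≤ 1 / 2) :
    ∫ ω, postEnt μ Wv Yv (tauOf μ Wv Yv δ T ω) ω ∂μ
      ≤ (-(δ * Real.log δ) - (1 - δ) * Real.log (1 - δ)) +
        (δ + (∫ ω, peMap μ Wv Yv (T ω) ω ∂μ) / δ) * Real.log (Fintype.card W) := by
  classical
  set M : ℕ := Fintype.card W with hMdef
  have hM1 : (1 : ℝ) ≤ M := by exact_mod_cast Fintype.card_pos
  have hlogM : 0 ≤ Real.log M := Real.log_nonneg hM1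
  -- basic facts about `post`
  have hpost0 : ∀ n ω w, 0 ≤ post μ Wv Yv n ω w :=
    fun n ω w => div_nonneg ENNReal.toReal_nonneg ENNReal.toReal_nonneg
  have hpost1 : ∀ n ω w, post μ Wv Yv n ω w ≤ 1 := by
    intro n ω w
    apply div_le_one_of_le₀
    · exact ENNReal.toReal_mono (measure_ne_top μ _) (measure_mono Set.inter_subset_right)
    · exact ENNReal.toReal_nonneg
  have hsup_mem : ∀ n ω, ∃ w, post μ Wv Yv n ω w = ⨆ w', post μ Wv Yv n ω w' :=
    fun n ω => exists_eq_ciSup_of_finite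
  have hpe_eq : ∀ n ω, peMap μ Wv Yv n ω = 1 - ⨆ w, post μ Wv Yv n ω w := fun n ω => rfl
  have hpe0 : ∀ n ω, 0 ≤ peMap μ Wv Yv n ω := by
    intro n ω
    obtain ⟨w, hw⟩ := hsup_mem n ω
    have h := hpost1 n ω w
    rw [hw] at h
    rw [hpe_eq]
    linarith
  have hpe1 : ∀ n ω, peMap μ Wv Yv n ω ≤ 1 := by
    intro n ω
    obtain ⟨w, hw⟩ := hsup_mem n ω
    have h := hpost0 n ω w
    rw [hw] at h
    rw [hpe_eq]
    linarith
  -- measurability of `histSet`-based quantities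
  have hhist_pre : ∀ n ω, histSet Yv n ω
      = (fun ω' => (fun i : Fin n => Yv ω' i)) ⁻¹' {fun i : Fin n => Yv ω i} := by
    intro n ω
    ext ω'
    simp only [histSet, Set.mem_setOf_eq, Set.mem_preimage, Set.mem_singleton_iff, funext_iff]
    constructor
    · intro h i; exact h i i.isLt
    · intro h i hi; exact h ⟨i, hi⟩
  have hV : ∀ n, Measurable (fun ω => (fun i : Fin n => Yv ω i)) :=
    fun n => measurable_pi_lambda _ fun i => hYv i
  have hhist_meas : ∀ n ω, MeasurableSet (histSet Yv n ω) := by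
    intro n ω
    rw [hhist_pre n ω]
    exact hV n (measurableSet_singleton _)
  have hfactor : ∀ (n : ℕ) (G : Set Ω → ℝ), Measurable fun ω => G (histSet Yv n ω) := by
    intro n G
    have heq : (fun ω => G (histSet Yv n ω))
        = (fun v : Fin n → Y => G ((fun ω' => (fun i : Fin n => Yv ω' i)) ⁻¹' {v}))
          ∘ (fun ω => (fun i : Fin n => Yv ω i)) := by
      funext ω
      simp only [Function.comp_apply]
      rw [hhist_pre n ω]
    rw [heq]
    exact (measurable_of_countable _).comp (hV n)
  have hpe_meas : ∀ n, Measurable fun ω => peMap μ Wv Yv n ω := fun n =>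
    hfactor n (fun B => 1 - ⨆ w, (μ ({ω' | Wv ω' = w} ∩ B)).toReal / (μ B).toReal)
  have hent_meas : ∀ n, Measurable fun ω => postEnt μ Wv Yv n ω := fun n =>
    hfactor n (fun B => ∑ w, -((μ ({ω' | Wv ω' = w} ∩ B)).toReal / (μ B).toReal *
      Real.log ((μ ({ω' | Wv ω' = w} ∩ B)).toReal / (μ B).toReal)))
  -- the stopping time
  set τ := tauOf μ Wv Yv δ T with hτdef
  have hτmem : ∀ ω, peMap μ Wv Yv (τ ω) ω ≤ δ ∨ τ ω = T ω := by
    intro ω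
    exact Nat.sInf_mem (⟨T ω, Or.inr rfl⟩ : {n | peMap μ Wv Yv n ω ≤ δ ∨ n = T ω}.Nonempty)
  have hSsetmeas : ∀ k, MeasurableSet {ω | peMap μ Wv Yv k ω ≤ δ ∨ k = T ω} := by
    intro k
    rw [Set.setOf_or]
    apply MeasurableSet.union
    · exact hpe_meas k measurableSet_Iic
    · have : {ω | k = T ω} = T ⁻¹' {k} := by ext ω; simp [eq_comm]
      rw [this]
      exact hT (measurableSet_singleton k)
  have hτ_meas : Measurable τ := by
    apply measurable_to_countable'
    intro n
    have hset : τ ⁻¹' {n} = {ω | peMap μ Wv Yv n ω ≤ δ ∨ n = T ω}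
        ∩ ⋂ k ∈ Finset.range n, {ω | peMap μ Wv Yv k ω ≤ δ ∨ k = T ω}ᶜ := by
      ext ω
      simp only [Set.mem_preimage, Set.mem_singleton_iff, Set.mem_inter_iff, Set.mem_setOf_eq,
        Set.mem_iInter, Finset.mem_range, Set.mem_compl_iff]
      constructor
      · intro h
        constructor
        · have := hτmem ω
          rw [h] at this
          exact this
        · intro k hk
          have : k < τ ω := by omega
          exact Nat.notMem_of_lt_sInf this
      · rintro ⟨h1, h2⟩
        have hle : τ ω ≤ n := Nat.sInf_le h1
        rcases eq_or_lt_of_le hle with h | h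
        · exact h
        · exact absurd (hτmem ω) (h2 _ h)
    rw [hset]
    exact (hSsetmeas n).inter
      (MeasurableSet.biInter (Finset.range n).countable_toSet fun k _ => (hSsetmeas k).compl)
  have hf_meas : Measurable fun ω => postEnt μ Wv Yv (τ ω) ω := by
    have h1 : Measurable fun p : Ω × ℕ => postEnt μ Wv Yv p.2 p.1 :=
      measurable_from_prod_countable_left fun n => hent_meas n
    have h2 : Measurable fun ω => ((ω, τ ω) : Ω × ℕ) := measurable_id.prodMk hτ_meas
    have h3 := h1.comp h2
    exact h3
  have hpeT_meas : Measurable fun ω => peMap μ Wv Yv (T ω) ω := by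
    have h1 : Measurable fun p : Ω × ℕ => peMap μ Wv Yv p.2 p.1 :=
      measurable_from_prod_countable_left fun n => hpe_meas n
    have h2 : Measurable fun ω => ((ω, T ω) : Ω × ℕ) := measurable_id.prodMk hT
    have h3 := h1.comp h2
    exact h3
  -- entropy facts
  have hent_eq : ∀ n ω, postEnt μ Wv Yv n ω = ∑ w, Real.negMulLog (post μ Wv Yv n ω w) := by
    intro n ω
    simp [postEnt, Real.negMulLog_eq_neg]
  have hent_nonneg : ∀ n ω, 0 ≤ postEnt μ Wv Yv n ω := by
    intro n ω
    rw [hent_eq]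
    exact Finset.sum_nonneg fun w _ => Real.negMulLog_nonneg (hpost0 n ω w) (hpost1 n ω w)
  have hent_le_card : ∀ n ω, postEnt μ Wv Yv n ω ≤ M := by
    intro n ω
    rw [hent_eq]
    calc ∑ w, Real.negMulLog (post μ Wv Yv n ω w) ≤ ∑ _w : W, (1 : ℝ) :=
          Finset.sum_le_sum fun w _ => (aux_negMulLog_le_one_sub (hpost0 n ω w)).trans
            (by linarith [hpost0 n ω w])
      _ = M := by simp [hMdef]
  -- posterior is a probability vector when the history has positive probability
  have hpost_zero : ∀ n ω, μ (histSet Yv n ω) = 0 → ∀ w, post μ Wv Yv n ω w = 0 := by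
    intro n ω h w
    have h2 : μ ({ω' | Wv ω' = w} ∩ histSet Yv n ω) = 0 :=
      measure_mono_null Set.inter_subset_right h
    simp only [post, h2]
    simp
  have hAmeas : ∀ w : W, MeasurableSet {ω' | Wv ω' = w} :=
    fun w => hWv (measurableSet_singleton w)
  have hsum_post : ∀ n ω, μ (histSet Yv n ω) ≠ 0 → ∑ w, post μ Wv Yv n ω w = 1 := by
    intro n ω h
    have hB := hhist_meas n ω
    have hU : (⋃ w : W, {ω' | Wv ω' = w} ∩ histSet Yv n ω) = histSet Yv n ω := by
      ext ω'; simp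
    have hdisj : Pairwise (Function.onFun Disjoint
        fun w : W => {ω' | Wv ω' = w} ∩ histSet Yv n ω) := by
      intro a b hab
      apply Set.disjoint_left.2
      rintro ω' ⟨ha, _⟩ ⟨hb, _⟩
      exact hab (ha.symm.trans hb)
    have hμ : ∑ w, μ ({ω' | Wv ω' = w} ∩ histSet Yv n ω) = μ (histSet Yv n ω) := by
      rw [← tsum_fintype (L := SummationFilter.unconditional W), ← measure_iUnion hdisj (fun w => (hAmeas w).inter hB), hU]
    have htr : ∑ w, (μ ({ω' | Wv ω' = w} ∩ histSet Yv n ω)).toReal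
        = (μ (histSet Yv n ω)).toReal := by
      rw [← ENNReal.toReal_sum (fun w _ => measure_ne_top μ _), hμ]
    simp only [post]
    rw [← Finset.sum_div, htr]
    exact div_self (ENNReal.toReal_ne_zero.2 ⟨h, measure_ne_top μ _⟩)
  -- entropy ≤ log M always
  have hent_le_log : ∀ n ω, postEnt μ Wv Yv n ω ≤ Real.log M := by
    intro n ω
    by_cases h : μ (histSet Yv n ω) = 0
    · rw [hent_eq, Finset.sum_eq_zero (fun w _ => by rw [hpost_zero n ω h w]; simp)]
      exact hlogM
    · rw [hent_eq]
      have := aux_sum_negMulLog_le Finset.univ (post μ Wv Yv n ω)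
        (fun w _ => hpost0 n ω w) (hsum_post n ω h)
      simpa [hMdef] using this
  -- Fano bound
  have hfano : ∀ n ω, peMap μ Wv Yv n ω ≤ δ →
      postEnt μ Wv Yv n ω ≤ Real.binEntropy δ + δ * Real.log M := by
    intro n ω hpe
    have hBne : μ (histSet Yv n ω) ≠ 0 := by
      intro h
      have hz := hpost_zero n ω h
      have hsup : (⨆ w, post μ Wv Yv n ω w) = 0 := by
        simp only [hz]
        exact ciSup_const
      rw [hpe_eq, hsup] at hpe
      linarith
    rw [hent_eq]
    exact aux_fano _ (hpost0 n ω) (hsum_post n ω hBne) hδ0 hδ (by rw [← hpe_eq]; exact hpe)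
  -- the bad event and Markov's inequality
  set S : Set Ω := {ω | δ < peMap μ Wv Yv (T ω) ω} with hSdef
  have hSmeas : MeasurableSet S := measurableSet_lt measurable_const hpeT_meas
  have hpeT_int : Integrable (fun ω => peMap μ Wv Yv (T ω) ω) μ := by
    apply (integrable_const (1 : ℝ)).mono' hpeT_meas.aestronglyMeasurable
    filter_upwards with ω
    rw [Real.norm_eq_abs, abs_le]
    exact ⟨by linarith [hpe0 (T ω) ω], hpe1 (T ω) ω⟩
  have hmarkov : δ * (μ S).toReal ≤ ∫ ω, peMap μ Wv Yv (T ω) ω ∂μ := by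
    have hind : ∫ ω, S.indicator (fun _ => δ) ω ∂μ = δ * (μ S).toReal := by
      rw [integral_indicator_const _ hSmeas, smul_eq_mul, mul_comm, measureReal_def]
    rw [← hind]
    apply integral_mono ((integrable_const δ).indicator hSmeas) hpeT_int
    intro ω
    by_cases h : ω ∈ S
    · rw [Set.indicator_of_mem h]
      exact le_of_lt h
    · rw [Set.indicator_of_notMem h]
      exact hpe0 _ _
  -- pointwise bound
  set C : ℝ := Real.binEntropy δ + δ * Real.log M with hCdef
  have hC0 : 0 ≤ C :=
    add_nonneg (Real.binEntropy_nonneg hδ0.le (by linarith)) (mul_nonneg hδ0.le hlogM)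
  have hpt : ∀ ω, postEnt μ Wv Yv (τ ω) ω ≤ C + S.indicator (fun _ => Real.log M) ω := by
    intro ω
    by_cases h : peMap μ Wv Yv (τ ω) ω ≤ δ
    · have h1 := hfano (τ ω) ω h
      have h2 : 0 ≤ S.indicator (fun _ => Real.log M) ω :=
        Set.indicator_nonneg (fun _ _ => hlogM) ω
      rw [hCdef]
      linarith
    · have hτT : τ ω = T ω := (hτmem ω).resolve_left h
      have hωS : ω ∈ S := by
        have : δ < peMap μ Wv Yv (τ ω) ω := lt_of_not_ge h
        rw [hτT] at this
        exact this
      rw [Set.indicator_of_mem hωS]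
      have := hent_le_log (τ ω) ω
      linarith
  -- integrability
  have hf_int : Integrable (fun ω => postEnt μ Wv Yv (τ ω) ω) μ := by
    apply (integrable_const (M : ℝ)).mono' hf_meas.aestronglyMeasurable
    filter_upwards with ω
    rw [Real.norm_eq_abs, abs_le]
    constructor
    · have := hent_nonneg (τ ω) ω
      linarith
    · exact hent_le_card (τ ω) ω
  have hg_int : Integrable (fun ω => C + S.indicator (fun _ => Real.log M) ω) μ :=
    (integrable_const C).add ((integrable_const _).indicator hSmeas)
  -- main estimate
  have hmain : ∫ ω, postEnt μ Wv Yv (τ ω) ω ∂μ ≤ C + Real.log M * (μ S).toReal := by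
    calc ∫ ω, postEnt μ Wv Yv (τ ω) ω ∂μ
        ≤ ∫ ω, (C + S.indicator (fun _ => Real.log M) ω) ∂μ :=
          integral_mono hf_int hg_int hpt
      _ = C + Real.log M * (μ S).toReal := by
          rw [integral_add (integrable_const C) ((integrable_const _).indicator hSmeas),
            integral_const, integral_indicator_const _ hSmeas]
          simp [smul_eq_mul, mul_comm, measureReal_def]
  have hμS : (μ S).toReal ≤ (∫ ω, peMap μ Wv Yv (T ω) ω ∂μ) / δ := by
    rw [le_div_iff₀ hδ0]
    linarith
  have hbin : Real.binEntropy δ = -(δ * Real.log δ) - (1 - δ) * Real.log (1 - δ) := by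
    rw [Real.binEntropy_eq_negMulLog_add_negMulLog_one_sub]
    simp only [Real.negMulLog]
    ring
  calc ∫ ω, postEnt μ Wv Yv (τ ω) ω ∂μ ≤ C + Real.log M * (μ S).toReal := hmain
    _ ≤ C + Real.log M * ((∫ ω, peMap μ Wv Yv (T ω) ω ∂μ) / δ) := by
        have := mul_le_mul_of_nonneg_left hμS hlogM
        linarith
    _ = (-(δ * Real.log δ) - (1 - δ) * Real.log (1 - δ)) +
        (δ + (∫ ω, peMap μ Wv Yv (T ω) ω ∂μ) / δ) * Real.log M := by
        rw [hCdef, hbin]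
        ring
end
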